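/- arXiv:2006.15934 — 3 statements merged into one kernel-verified Lean document; each statement's English description precedes it below -/
import Mathlib

section
/- Fix t ∈ (0,1) and R, r ∈ (0,∞) with R > r > tR. Let A(r,R) = {ζ ∈ ℂ : r ≤ |ζ| ≤ R} be the closed annulus and Y = {(w, z, u) ∈ A(r,R) × A(r,R) × (ℂ ∖ [0,∞)) : |w| < |z|}. Then: (i) the function (w,z,u) ↦ S(w,z;u,t) is well defined and jointly continuous on Y; (ii) for fixed u ∈ ℂ ∖ [0,∞) and w ∈ A(r,R), the function z ↦ S(w,z;u,t) is holomorphic (complex differentiable) on {ζ ∈ A(r,R) : |ζ| > |w|}; (iii) for fixed u ∈ ℂ ∖ [0,∞) and z ∈ A(r,R), the function w ↦ S(w,z;u,t) is holomorphic on {ζ ∈ A(r,R) : |ζ| < |z|}; and (iv) for fixed w, z ∈ A(r,R) with |w| < |z|, the function u ↦ S(w,z;u,t) is holomorphic on ℂ ∖ [0,∞). -/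
set_option maxHeartbeats 1000000
noncomputable def STerm (t : ℝ) (w z u : ℂ) (m : ℤ) : ℂ :=
  (Real.pi : ℂ) *
      (-u) ^ ((Complex.log w - Complex.log z) / (Real.log t : ℂ) -
        2 * (m : ℂ) * (Real.pi : ℂ) * Complex.I / (Real.log t : ℂ)) /
    Complex.sin (-(Real.pi : ℂ) * ((Complex.log w - Complex.log z) / (Real.log t : ℂ) -
        2 * (m : ℂ) * (Real.pi : ℂ) * Complex.I / (Real.log t : ℂ)))

noncomputable def SFun (t : ℝ) (w z u : ℂ) : ℂ := ∑' m : ℤ, STerm t w z u m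

open Complex Real Set Filter
open scoped Topology

noncomputable def qc (L : ℝ) : ℂ := 2 * (Real.pi : ℂ) * Complex.I / (L : ℂ)
noncomputable def TT (L : ℝ) (A u : ℂ) (m : ℤ) : ℂ :=
  (Real.pi : ℂ) * (-u) ^ (A - (m : ℂ) * qc L) /
    Complex.sin (-(Real.pi : ℂ) * (A - (m : ℂ) * qc L))
noncomputable def GG (L : ℝ) (A u : ℂ) : ℂ := ∑' m : ℤ, TT L A u m
noncomputable def cc (L : ℝ) : ℝ := 2 * Real.pi / (-L)
noncomputable def rho (L θ : ℝ) : ℝ := Real.exp (-((Real.pi - θ) * cc L))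
noncomputable def Cb (L ε M θ : ℝ) : ℝ :=
  Real.pi * Real.exp M *
    max (Real.exp (4 * θ * cc L) / (Real.sin (Real.pi * ε) * rho L θ ^ 2))
      (Real.exp (2 * (Real.pi - θ) * cc L) / ((1 - Real.exp (-(2 * Real.pi * cc L))) / 2))
def Conds (L ε M θ : ℝ) (A u : ℂ) : Prop :=
  (-u ∈ Complex.slitPlane) ∧ ε ≤ A.re ∧ A.re ≤ 1 - ε ∧ |A.im| ≤ 2 * cc L ∧
    |(Complex.log (-u)).re| ≤ M ∧ |(Complex.log (-u)).im| ≤ θ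

lemma STerm_eq_TT (t : ℝ) (w z u : ℂ) (m : ℤ) :
    STerm t w z u m =
      TT (Real.log t) ((Complex.log w - Complex.log z) / (Real.log t : ℂ)) u m := by
  have h : (Complex.log w - Complex.log z) / (Real.log t : ℂ) -
        2 * (m : ℂ) * (Real.pi : ℂ) * Complex.I / (Real.log t : ℂ)
      = (Complex.log w - Complex.log z) / (Real.log t : ℂ) - (m : ℂ) * qc (Real.log t) := by
    unfold qc; ring
  unfold STerm TT
  rw [h]

lemma SFun_eq_GG (t : ℝ) (w z u : ℂ) :
    SFun t w z u = GG (Real.log t) ((Complex.log w - Complex.log z) / (Real.log t : ℂ)) u :=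
  tsum_congr fun m => STerm_eq_TT t w z u m

lemma TT_shift (L : ℝ) (A u : ℂ) (k m : ℤ) :
    TT L (A + (k : ℂ) * qc L) u m = TT L A u (m - k) := by
  have h : A + (k : ℂ) * qc L - (m : ℂ) * qc L = A - ((m - k : ℤ) : ℂ) * qc L := by
    push_cast; ring
  unfold TT
  rw [h]

lemma GG_periodic (L : ℝ) (A u : ℂ) (k : ℤ) : GG L (A + (k : ℂ) * qc L) u = GG L A u := by
  unfold GG
  calc ∑' m : ℤ, TT L (A + (k : ℂ) * qc L) u m = ∑' m : ℤ, TT L A u (m - k) :=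
        tsum_congr fun m => TT_shift L A u k m
    _ = ∑' m : ℤ, TT L A u m := (Equiv.subRight k).tsum_eq (TT L A u)

lemma GG_congr (L : ℝ) (A A' u : ℂ) (h : ∃ k : ℤ, A' = A + (k : ℂ) * qc L) :
    GG L A' u = GG L A u := by
  obtain ⟨k, rfl⟩ := h; exact GG_periodic L A u k

lemma normSq_sin (z : ℂ) :
    Complex.normSq (Complex.sin z) = Real.sin z.re ^ 2 + Real.sinh z.im ^ 2 := by
  have hz : z = (z.re : ℂ) + (z.im : ℂ) * Complex.I := (Complex.re_add_im z).symm
  nth_rewrite 1 [hz]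
  rw [Complex.sin_add, Complex.sin_mul_I, Complex.cos_mul_I,
    ← Complex.ofReal_sin, ← Complex.ofReal_cos, ← Complex.ofReal_sinh, ← Complex.ofReal_cosh]
  have h2 := Real.cosh_sq z.im
  simp only [Complex.normSq_apply, Complex.add_re, Complex.add_im, Complex.mul_re,
    Complex.mul_im, Complex.ofReal_re, Complex.ofReal_im, Complex.I_re, Complex.I_im]
  nlinarith [Real.sin_sq_add_cos_sq z.re]

lemma abs_sin_ge_sin_re (z : ℂ) : |Real.sin z.re| ≤ ‖Complex.sin z‖ := by
  rw [Complex.norm_def, ← Real.sqrt_sq_eq_abs]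
  apply Real.sqrt_le_sqrt
  rw [normSq_sin]
  nlinarith [sq_nonneg (Real.sinh z.im)]

lemma abs_sin_ge_sinh_im (z : ℂ) : |Real.sinh z.im| ≤ ‖Complex.sin z‖ := by
  rw [Complex.norm_def, ← Real.sqrt_sq_eq_abs]
  apply Real.sqrt_le_sqrt
  rw [normSq_sin]
  nlinarith [sq_nonneg (Real.sin z.re)]

lemma sin_pi_mul_ge {ε x : ℝ} (hε : 0 < ε) (h1 : ε ≤ x) (h2 : x ≤ 1 - ε) :
    Real.sin (Real.pi * ε) ≤ Real.sin (Real.pi * x) := by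
  have hε2 : ε ≤ 1/2 := by linarith
  have hmono := Real.strictMonoOn_sin.monotoneOn
  rcases le_or_gt x (1/2) with hx | hx
  · apply hmono _ _ (by nlinarith [Real.pi_pos])
    · constructor <;> nlinarith [Real.pi_pos]
    · constructor <;> nlinarith [Real.pi_pos]
  · have : Real.sin (Real.pi * x) = Real.sin (Real.pi * (1 - x)) := by
      rw [← Real.sin_pi_sub]; ring_nf
    rw [this]
    apply hmono _ _ (by nlinarith [Real.pi_pos])
    · constructor <;> nlinarith [Real.pi_pos]
    · constructor <;> nlinarith [Real.pi_pos]

lemma s_re_im (L : ℝ) (A : ℂ) (m : ℤ) :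
    (A - (m : ℂ) * qc L).re = A.re ∧ (A - (m : ℂ) * qc L).im = A.im - m * (2 * Real.pi / L) := by
  have h : (m : ℂ) * qc L = (((m : ℝ) * (2 * Real.pi / L) : ℝ) : ℂ) * Complex.I := by
    unfold qc; push_cast; field_simp
  rw [h]
  constructor <;> simp

lemma abs_int_cast_real (m : ℤ) : |(m : ℝ)| = (m.natAbs : ℝ) := by
  rw [← Int.cast_abs, Int.abs_eq_natAbs, Int.cast_natCast]


lemma cc_pos {L : ℝ} (hL : L < 0) : 0 < cc L := by
  unfold cc
  apply div_pos (by positivity) (by linarith)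

lemma rho_pos (L θ : ℝ) : 0 < rho L θ := Real.exp_pos _

lemma rho_lt_one {L θ : ℝ} (hL : L < 0) (hθ : θ < Real.pi) : rho L θ < 1 := by
  unfold rho
  rw [Real.exp_lt_one_iff]
  have := cc_pos hL
  nlinarith

lemma TT_bound (L : ℝ) (hL : L < 0) (ε M θ : ℝ) (hε : 0 < ε) (hε' : ε ≤ 1/2)
    (hθ0 : 0 ≤ θ) (hθ : θ < Real.pi)
    (A u : ℂ) (hu0 : -u ≠ 0)
    (hA1 : ε ≤ A.re) (hA2 : A.re ≤ 1 - ε) (hAim : |A.im| ≤ 2 * cc L)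
    (hlre : |(Complex.log (-u)).re| ≤ M) (hlim : |(Complex.log (-u)).im| ≤ θ)
    (m : ℤ) :
    ‖TT L A u m‖ ≤ Cb L ε M θ * rho L θ ^ m.natAbs := by
  have hπ := Real.pi_pos
  have hc := cc_pos hL
  set s : ℂ := A - (m : ℂ) * qc L with hs
  obtain ⟨hsre, hsim⟩ := s_re_im L A m
  rw [← hs] at hsre hsim
  have hsim' : s.im = A.im + m * cc L := by
    rw [hsim]; unfold cc; rw [div_neg]; ring
  set y : ℝ := |s.im| with hy
  have hmabs : |(m : ℝ)| = (m.natAbs : ℝ) := abs_int_cast_real m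
  have hmc : |(m : ℝ) * cc L| = (m.natAbs : ℝ) * cc L := by
    rw [abs_mul, abs_of_pos hc, hmabs]
  have hylb : cc L * m.natAbs - 2 * cc L ≤ y := by
    have h1 : |(m : ℝ) * cc L| - |A.im| ≤ |A.im + (m : ℝ) * cc L| := by
      have h := abs_sub_abs_le_abs_sub ((m : ℝ) * cc L) (-A.im)
      simp only [sub_neg_eq_add, abs_neg] at h
      calc |(m : ℝ) * cc L| - |A.im| ≤ |(m : ℝ) * cc L + A.im| := h
        _ = |A.im + (m : ℝ) * cc L| := by rw [add_comm]
    rw [hy, hsim']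
    rw [hmc] at h1
    linarith
  have hyub : y ≤ cc L * m.natAbs + 2 * cc L := by
    rw [hy, hsim']
    calc |A.im + (m : ℝ) * cc L| ≤ |A.im| + |(m : ℝ) * cc L| := abs_add_le _ _
      _ ≤ cc L * m.natAbs + 2 * cc L := by rw [hmc]; linarith
  have hy0 : 0 ≤ y := abs_nonneg _
  have hM0 : 0 ≤ M := le_trans (abs_nonneg _) hlre
  have hnum : ‖(-u) ^ s‖ ≤ Real.exp (M + θ * y) := by
    rw [Complex.cpow_def_of_ne_zero hu0, Complex.norm_exp]
    apply Real.exp_le_exp.mpr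
    rw [Complex.mul_re]
    have h1 : (Complex.log (-u)).re * s.re ≤ M := by
      rw [hsre]
      calc (Complex.log (-u)).re * A.re ≤ |(Complex.log (-u)).re * A.re| := le_abs_self _
        _ = |(Complex.log (-u)).re| * |A.re| := abs_mul _ _
        _ ≤ M * 1 := by
            apply mul_le_mul hlre _ (abs_nonneg _) hM0
            rw [_root_.abs_of_nonneg (by linarith : (0:ℝ) ≤ A.re)]; linarith
        _ = M := mul_one M
    have h2 : -((Complex.log (-u)).im * s.im) ≤ θ * y := by
      calc -((Complex.log (-u)).im * s.im) ≤ |(Complex.log (-u)).im * s.im| := neg_le_abs _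
        _ = |(Complex.log (-u)).im| * |s.im| := abs_mul _ _
        _ ≤ θ * y := mul_le_mul_of_nonneg_right hlim (abs_nonneg _)
    linarith
  set D : ℝ := ‖Complex.sin (-(Real.pi : ℂ) * s)‖ with hD
  have hargre : ((-(Real.pi : ℂ) * s).re) = -(Real.pi * s.re) := by simp
  have hargim : ((-(Real.pi : ℂ) * s).im) = -(Real.pi * s.im) := by simp
  set σ : ℝ := Real.sin (Real.pi * ε) with hσ
  have hσpos : 0 < σ := by
    apply Real.sin_pos_of_pos_of_lt_pi (by positivity)
    nlinarith
  have hDσ : σ ≤ D := by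
    have h := abs_sin_ge_sin_re (-(Real.pi : ℂ) * s)
    rw [hargre] at h
    refine le_trans ?_ h
    rw [Real.sin_neg, abs_neg, hsre]
    calc σ ≤ Real.sin (Real.pi * A.re) := sin_pi_mul_ge hε hA1 hA2
      _ ≤ |Real.sin (Real.pi * A.re)| := le_abs_self _
  have hDsinh : Real.sinh (Real.pi * y) ≤ D := by
    have h := abs_sin_ge_sinh_im (-(Real.pi : ℂ) * s)
    rw [hargim] at h
    refine le_trans ?_ h
    rw [Real.sinh_neg, abs_neg, Real.abs_sinh, abs_mul, _root_.abs_of_pos hπ]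
  have hD0 : 0 < D := lt_of_lt_of_le hσpos hDσ
  have hTT : ‖TT L A u m‖ = Real.pi * ‖(-u) ^ s‖ / D := by
    unfold TT
    rw [← hs, norm_div, norm_mul, Complex.norm_real, Real.norm_eq_abs,
      _root_.abs_of_pos hπ, hD]
  rw [hTT]
  have hρ := rho_pos L θ
  have hρ1 := rho_lt_one hL hθ
  have hρpow : (rho L θ : ℝ) ^ m.natAbs = Real.exp (-((Real.pi - θ) * cc L) * m.natAbs) := by
    unfold rho
    rw [← Real.exp_nat_mul, mul_comm]
  have habs0 : 0 ≤ ‖(-u) ^ s‖ := norm_nonneg _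
  rcases le_or_gt m.natAbs 2 with hm' | hm'
  · -- small m
    have hm : (m.natAbs : ℝ) ≤ 2 := by exact_mod_cast hm'
    set P : ℝ := Real.pi * Real.exp M * (Real.exp (4 * θ * cc L) / (σ * rho L θ ^ 2)) with hP
    have hy4 : y ≤ 4 * cc L := by nlinarith
    have key : Real.pi * ‖(-u) ^ s‖ / D ≤ P * rho L θ ^ 2 := by
      have hPeq : P * rho L θ ^ 2 = Real.pi * Real.exp M * Real.exp (4 * θ * cc L) / σ := by
        rw [hP]; field_simp
      rw [hPeq]
      have h2 : Real.exp (M + θ * y) ≤ Real.exp M * Real.exp (4 * θ * cc L) := by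
        rw [← Real.exp_add]
        apply Real.exp_le_exp.mpr
        nlinarith
      calc Real.pi * ‖(-u) ^ s‖ / D ≤ Real.pi * Real.exp (M + θ * y) / σ := by
            gcongr
        _ ≤ Real.pi * (Real.exp M * Real.exp (4 * θ * cc L)) / σ := by gcongr
        _ = Real.pi * Real.exp M * Real.exp (4 * θ * cc L) / σ := by ring
    refine le_trans key ?_
    have hPC : P ≤ Cb L ε M θ := by
      rw [hP]; unfold Cb
      rw [← hσ]
      gcongr
      exact le_max_left _ _
    have hr2 : rho L θ ^ 2 ≤ rho L θ ^ m.natAbs := by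
      apply pow_le_pow_of_le_one (le_of_lt hρ) (le_of_lt hρ1)
      exact_mod_cast hm
    have hP0 : 0 ≤ P := by rw [hP]; positivity
    calc P * rho L θ ^ 2 ≤ P * rho L θ ^ m.natAbs := by gcongr
      _ ≤ Cb L ε M θ * rho L θ ^ m.natAbs := by gcongr
  · -- large m
    have hm : (3 : ℝ) ≤ (m.natAbs : ℝ) := by exact_mod_cast hm'
    have hyc : cc L ≤ y := by nlinarith
    set β : ℝ := (1 - Real.exp (-(2 * Real.pi * cc L))) / 2 with hβ
    have hβpos : 0 < β := by
      rw [hβ]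
      have : Real.exp (-(2 * Real.pi * cc L)) < 1 := by
        rw [Real.exp_lt_one_iff]; nlinarith
      linarith
    have hsinh : Real.exp (Real.pi * y) * β ≤ Real.sinh (Real.pi * y) := by
      rw [Real.sinh_eq, hβ]
      have h1 : Real.exp (-(Real.pi * y)) = Real.exp (Real.pi * y) * Real.exp (-(2 * (Real.pi * y))) := by
        rw [← Real.exp_add]; ring_nf
      have h2 : Real.exp (-(2 * (Real.pi * y))) ≤ Real.exp (-(2 * Real.pi * cc L)) := by
        apply Real.exp_le_exp.mpr; nlinarith
      have h3 : 0 < Real.exp (Real.pi * y) := Real.exp_pos _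
      rw [h1]
      nlinarith
    have hDe : Real.exp (Real.pi * y) * β ≤ D := le_trans hsinh hDsinh
    set Q : ℝ := Real.pi * Real.exp M * (Real.exp (2 * (Real.pi - θ) * cc L) / β) with hQ
    have key : Real.pi * ‖(-u) ^ s‖ / D ≤ Q * rho L θ ^ m.natAbs := by
      have step1 : Real.pi * ‖(-u) ^ s‖ / D ≤
          Real.pi * Real.exp (M + θ * y) / (Real.exp (Real.pi * y) * β) := by
        gcongr
      refine le_trans step1 ?_
      have heq : Real.pi * Real.exp (M + θ * y) / (Real.exp (Real.pi * y) * β) =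
          Real.pi * Real.exp M * (Real.exp (θ * y - Real.pi * y) / β) := by
        rw [Real.exp_sub, Real.exp_add]
        field_simp
      rw [heq, hQ]
      have hexp : Real.exp (θ * y - Real.pi * y) ≤
          Real.exp (2 * (Real.pi - θ) * cc L) * rho L θ ^ m.natAbs := by
        rw [hρpow, ← Real.exp_add]
        apply Real.exp_le_exp.mpr
        have h1 : (Real.pi - θ) * (cc L * m.natAbs - 2 * cc L) ≤ (Real.pi - θ) * y :=
          mul_le_mul_of_nonneg_left hylb (by linarith)
        linarith
      calc Real.pi * Real.exp M * (Real.exp (θ * y - Real.pi * y) / β)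
          ≤ Real.pi * Real.exp M * (Real.exp (2 * (Real.pi - θ) * cc L) * rho L θ ^ m.natAbs / β) := by
            gcongr
        _ = Real.pi * Real.exp M * (Real.exp (2 * (Real.pi - θ) * cc L) / β) * rho L θ ^ m.natAbs := by
            ring
    refine le_trans key ?_
    have hQC : Q ≤ Cb L ε M θ := by
      rw [hQ]; unfold Cb
      rw [← hβ, ← hσ]
      gcongr
      exact le_max_right _ _
    gcongr

lemma summable_maj (C ρ : ℝ) (h0 : 0 ≤ ρ) (h1 : ρ < 1) :
    Summable (fun m : ℤ => C * ρ ^ m.natAbs) := by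
  apply Summable.mul_left
  apply Summable.of_nat_of_neg <;>
    simpa using summable_geometric_of_lt_one h0 h1

lemma sin_term_ne_zero (L : ℝ) (ε : ℝ) (hε : 0 < ε) (hε' : ε ≤ 1/2) (A : ℂ)
    (hA1 : ε ≤ A.re) (hA2 : A.re ≤ 1 - ε) (m : ℤ) :
    Complex.sin (-(Real.pi : ℂ) * (A - (m : ℂ) * qc L)) ≠ 0 := by
  have hπ := Real.pi_pos
  have hσpos : 0 < Real.sin (Real.pi * ε) := by
    apply Real.sin_pos_of_pos_of_lt_pi (by positivity)
    nlinarith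
  have h := abs_sin_ge_sin_re (-(Real.pi : ℂ) * (A - (m : ℂ) * qc L))
  have hre : (-(Real.pi : ℂ) * (A - (m : ℂ) * qc L)).re = -(Real.pi * A.re) := by
    have := (s_re_im L A m).1
    simp [this]
  rw [hre, Real.sin_neg, abs_neg] at h
  have h2 : Real.sin (Real.pi * ε) ≤ |Real.sin (Real.pi * A.re)| :=
    le_trans (sin_pi_mul_ge hε hA1 hA2) (le_abs_self _)
  intro hzero
  rw [hzero] at h
  simp only [norm_zero] at h
  linarith

/-- continuity of the term as map of x -/
lemma TT_contAt {X : Type*} [TopologicalSpace X] (L : ℝ) (ε : ℝ) (hε : 0 < ε) (hε' : ε ≤ 1/2)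
    (fA fu : X → ℂ) (x : X) (hfA : ContinuousAt fA x) (hfu : ContinuousAt fu x)
    (hslit : -fu x ∈ Complex.slitPlane)
    (hA1 : ε ≤ (fA x).re) (hA2 : (fA x).re ≤ 1 - ε) (m : ℤ) :
    ContinuousAt (fun y => TT L (fA y) (fu y) m) x := by
  unfold TT
  apply ContinuousAt.div
  · exact continuousAt_const.mul ((hfu.neg).cpow (hfA.sub continuousAt_const) hslit)
  · exact Complex.continuous_sin.continuousAt.comp
      (continuousAt_const.mul (hfA.sub continuousAt_const))
  · exact sin_term_ne_zero L ε hε hε' (fA x) hA1 hA2 m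

lemma TT_diffAt (L : ℝ) (ε : ℝ) (hε : 0 < ε) (hε' : ε ≤ 1/2)
    (fA fu : ℂ → ℂ) (x : ℂ) (hfA : DifferentiableAt ℂ fA x) (hfu : DifferentiableAt ℂ fu x)
    (hslit : -fu x ∈ Complex.slitPlane)
    (hA1 : ε ≤ (fA x).re) (hA2 : (fA x).re ≤ 1 - ε) (m : ℤ) :
    DifferentiableAt ℂ (fun y => TT L (fA y) (fu y) m) x := by
  unfold TT
  apply DifferentiableAt.div
  · exact (differentiableAt_const _).mul ((hfu.neg).cpow (hfA.sub (differentiableAt_const _)) hslit)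
  · exact Complex.differentiable_sin.differentiableAt.comp x
      ((differentiableAt_const _).mul (hfA.sub (differentiableAt_const _)))
  · exact sin_term_ne_zero L ε hε hε' (fA x) hA1 hA2 m


lemma GG_cont {X : Type*} [TopologicalSpace X] (L : ℝ) (hL : L < 0) (ε M θ : ℝ)
    (hε : 0 < ε) (hε' : ε ≤ 1/2) (hθ0 : 0 ≤ θ) (hθ : θ < Real.pi)
    (s : Set X) (fA fu : X → ℂ)
    (hfA : ∀ x ∈ s, ContinuousAt fA x) (hfu : ∀ x ∈ s, ContinuousAt fu x)
    (hcond : ∀ x ∈ s, Conds L ε M θ (fA x) (fu x)) :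
    ContinuousOn (fun x => GG L (fA x) (fu x)) s := by
  have hρ0 := rho_pos L θ
  have hρ1 := rho_lt_one hL hθ
  have hsum := summable_maj (Cb L ε M θ) (rho L θ) (le_of_lt hρ0) hρ1
  have hb : ∀ (m : ℤ) (x : X), x ∈ s →
      ‖TT L (fA x) (fu x) m‖ ≤ Cb L ε M θ * rho L θ ^ m.natAbs := by
    intro m x hx
    obtain ⟨h1, h2, h3, h4, h5, h6⟩ := hcond x hx
    exact TT_bound L hL ε M θ hε hε' hθ0 hθ (fA x) (fu x)
      (Complex.slitPlane_ne_zero h1) h2 h3 h4 h5 h6 m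
  have := (tendstoUniformlyOn_tsum hsum hb).continuousOn (Eventually.of_forall ?_).frequently
  · exact this
  · intro T
    apply continuousOn_finset_sum
    intro m _
    intro x hx
    obtain ⟨h1, h2, h3, _, _, _⟩ := hcond x hx
    exact (TT_contAt L ε hε hε' fA fu x (hfA x hx) (hfu x hx) h1 h2 h3 m).continuousWithinAt

lemma GG_diff (L : ℝ) (hL : L < 0) (ε M θ : ℝ)
    (hε : 0 < ε) (hε' : ε ≤ 1/2) (hθ0 : 0 ≤ θ) (hθ : θ < Real.pi)
    (U : Set ℂ) (hU : IsOpen U) (fA fu : ℂ → ℂ)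
    (hfA : ∀ x ∈ U, DifferentiableAt ℂ fA x) (hfu : ∀ x ∈ U, DifferentiableAt ℂ fu x)
    (hcond : ∀ x ∈ U, Conds L ε M θ (fA x) (fu x)) :
    DifferentiableOn ℂ (fun x => GG L (fA x) (fu x)) U := by
  have hρ0 := rho_pos L θ
  have hρ1 := rho_lt_one hL hθ
  have hsum := summable_maj (Cb L ε M θ) (rho L θ) (le_of_lt hρ0) hρ1
  apply differentiableOn_tsum_of_summable_norm hsum
  · intro m x hx
    obtain ⟨h1, h2, h3, _, _, _⟩ := hcond x hx
    exact (TT_diffAt L ε hε hε' fA fu x (hfA x hx) (hfu x hx) h1 h2 h3 m).differentiableWithinAt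
  · exact hU
  · intro m x hx
    obtain ⟨h1, h2, h3, h4, h5, h6⟩ := hcond x hx
    exact TT_bound L hL ε M θ hε hε' hθ0 hθ (fA x) (fu x)
      (Complex.slitPlane_ne_zero h1) h2 h3 h4 h5 h6 m

lemma image_ofReal_Ici : Complex.ofReal '' Set.Ici (0:ℝ) = {z : ℂ | 0 ≤ z.re ∧ z.im = 0} := by
  ext z
  constructor
  · rintro ⟨x, hx, rfl⟩
    exact ⟨by simpa using hx, by simp⟩
  · rintro ⟨h1, h2⟩
    exact ⟨z.re, h1, Complex.ext (by simp) (by simp [h2.symm])⟩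

lemma isOpen_compl_Ici : IsOpen ((Complex.ofReal '' Set.Ici (0:ℝ))ᶜ) := by
  rw [image_ofReal_Ici]
  have : IsClosed {z : ℂ | 0 ≤ z.re ∧ z.im = 0} :=
    (isClosed_le continuous_const Complex.continuous_re).inter
      (isClosed_eq Complex.continuous_im continuous_const)
  exact this.isOpen_compl

lemma neg_mem_slitPlane_of {u : ℂ} (hu : u ∈ (Complex.ofReal '' Set.Ici (0:ℝ))ᶜ) :
    -u ∈ Complex.slitPlane := by
  rw [image_ofReal_Ici] at hu
  simp only [mem_compl_iff, mem_setOf_eq, not_and_or, not_le] at hu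
  rw [Complex.mem_slitPlane_iff]
  rcases hu with h | h
  · left; simpa using h
  · right; simpa using h

lemma mem_compl_of_slit {u : ℂ} (hu : -u ∈ Complex.slitPlane) :
    u ∈ (Complex.ofReal '' Set.Ici (0:ℝ))ᶜ := by
  rw [image_ofReal_Ici]
  rw [Complex.mem_slitPlane_iff] at hu
  simp only [mem_compl_iff, mem_setOf_eq, not_and_or, not_le]
  rcases hu with h | h
  · left; simpa using h
  · right; simpa using h

lemma abs_arg_lt_pi_of_slit {z : ℂ} (hz : z ∈ Complex.slitPlane) : |z.arg| < Real.pi := by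
  rcases lt_or_ge z.arg Real.pi with h | h
  · rw [abs_lt]; exact ⟨Complex.neg_pi_lt_arg z, h⟩
  · exfalso
    have harg : z.arg = Real.pi := le_antisymm (Complex.arg_le_pi z) h
    rw [Complex.arg_eq_pi_iff] at harg
    rw [Complex.mem_slitPlane_iff] at hz
    rcases hz with h' | h' <;> [linarith [harg.1]; exact h' harg.2]

lemma A_re_im (L : ℝ) (hL : L ≠ 0) (x : ℂ) :
    (x / (L : ℂ)).re = x.re / L ∧ (x / (L : ℂ)).im = x.im / L := by
  constructor
  · rw [Complex.div_re]
    simp only [Complex.ofReal_re, Complex.ofReal_im, Complex.normSq_apply, mul_zero]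
    field_simp
    ring
  · rw [Complex.div_im]
    simp only [Complex.ofReal_re, Complex.ofReal_im, Complex.normSq_apply, mul_zero]
    field_simp
    ring

lemma v_mem_Ioo {t r R : ℝ} (ht : t ∈ Set.Ioo (0:ℝ) 1) (hr : 0 < r) (htR : t * R < r)
    {a b : ℝ} (ha : a ∈ Set.Icc r R) (hb : b ∈ Set.Icc r R) (hab : a < b) :
    (Real.log a - Real.log b) / Real.log t ∈ Set.Ioo (0:ℝ) 1 := by
  have hL : Real.log t < 0 := Real.log_neg ht.1 ht.2
  have ha0 : 0 < a := lt_of_lt_of_le hr ha.1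
  have hb0 : 0 < b := lt_of_lt_of_le hr hb.1
  have hRpos : 0 < R := lt_of_lt_of_le hb0 hb.2
  have hlog : Real.log a < Real.log b := Real.log_lt_log ha0 hab
  constructor
  · apply div_pos_of_neg_of_neg (by linarith) hL
  · rw [div_lt_iff_of_neg hL]
    have hgoal : Real.log t < Real.log a - Real.log b := by
      have h1 : Real.log b - Real.log a ≤ Real.log R - Real.log r :=
        sub_le_sub (Real.log_le_log hb0 hb.2) (Real.log_le_log hr ha.1)
      have h2 : Real.log R - Real.log r < -Real.log t := by
        have hRr : R / r < 1 / t := by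
          rw [div_lt_div_iff₀ (by linarith) ht.1]
          linarith
        have := Real.log_lt_log (by positivity) hRr
        rw [Real.log_div (by positivity) (by linarith), Real.log_div one_ne_zero (ne_of_gt ht.1),
          Real.log_one] at this
        linarith
      linarith
    linarith

lemma exists_branch (x₀ : ℂ) (hx₀ : x₀ ≠ 0) :
    ∃ ℓ : ℂ → ℂ, ∀ᶠ x in 𝓝 x₀,
      DifferentiableAt ℂ ℓ x ∧ (∃ k : ℤ, ℓ x = Complex.log x + (k : ℂ) * (2 * Real.pi * Complex.I))
      ∧ |(ℓ x).im| ≤ 2 * Real.pi := by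
  set d : ℂ := (starRingEnd ℂ) x₀ with hd
  have hd0 : d ≠ 0 := by simpa [hd] using hx₀
  refine ⟨fun x => Complex.log (x * d) - Complex.log d, ?_⟩
  have hslit : ∀ᶠ x in 𝓝 x₀, x * d ∈ Complex.slitPlane := by
    have hcont : ContinuousAt (fun x : ℂ => x * d) x₀ := by fun_prop
    apply hcont.eventually_mem
    apply Complex.isOpen_slitPlane.mem_nhds
    rw [Complex.mem_slitPlane_iff]
    left
    have : x₀ * d = ((‖x₀‖ ^ 2 : ℝ) : ℂ) := by
      rw [hd, Complex.mul_conj]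
      norm_cast
      rw [Complex.sq_norm]
    rw [this]
    simp only [Complex.ofReal_re]
    have : ‖x₀‖ ≠ 0 := by simpa using hx₀
    positivity
  have hne : ∀ᶠ x in 𝓝 x₀, x ≠ 0 := eventually_ne_nhds hx₀
  filter_upwards [hslit, hne] with x hx hxne
  refine ⟨?_, ?_, ?_⟩
  · apply DifferentiableAt.sub_const
    exact DifferentiableAt.comp (g := Complex.log) (f := fun y : ℂ => y * d) x (Complex.differentiableAt_log hx) (by fun_prop)
  · have hxd : x * d ≠ 0 := mul_ne_zero hxne hd0
    have hexp : Complex.exp (Complex.log (x * d) - Complex.log d) = x := by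
      rw [Complex.exp_sub, Complex.exp_log hxd, Complex.exp_log hd0]
      field_simp
    have : Complex.exp (Complex.log (x * d) - Complex.log d) = Complex.exp (Complex.log x) := by
      rw [hexp, Complex.exp_log hxne]
    obtain ⟨n, hn⟩ := Complex.exp_eq_exp_iff_exists_int.mp this
    exact ⟨n, hn⟩
  · rw [Complex.sub_im]
    have h1 := Complex.abs_arg_le_pi (x * d)
    have h2 := Complex.abs_arg_le_pi d
    rw [Complex.log_im, Complex.log_im]
    calc |(x * d).arg - d.arg| ≤ |(x * d).arg| + |d.arg| := abs_sub _ _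
      _ ≤ 2 * Real.pi := by linarith

lemma Aim_bound {L : ℝ} (hL : L < 0) (x : ℂ) (hx : |x.im| ≤ 4 * Real.pi) :
    |(x / (L : ℂ)).im| ≤ 2 * cc L := by
  rw [(A_re_im L (ne_of_lt hL) x).2, abs_div, abs_of_neg hL]
  have h : 2 * cc L = 4 * Real.pi / (-L) := by
    unfold cc; field_simp; ring
  rw [h]
  gcongr
  linarith

lemma branch_re {x : ℂ} {ℓx : ℂ} {k : ℤ}
    (hk : ℓx = Complex.log x + (k : ℂ) * (2 * Real.pi * Complex.I)) :
    ℓx.re = Real.log (‖x‖) := by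
  rw [hk, Complex.add_re, Complex.log_re]
  have : ((k : ℂ) * (2 * (Real.pi : ℂ) * Complex.I)).re = 0 := by
    simp [Complex.mul_re]
  rw [this, add_zero]

theorem stmt14 (t : ℝ) (ht : t ∈ Set.Ioo (0:ℝ) 1) (r R : ℝ)
    (hr : 0 < r) (hrR : r < R) (htR : t * R < r) :
    (∀ w z u : ℂ, ‖w‖ ∈ Set.Icc r R → ‖z‖ ∈ Set.Icc r R →
        u ∈ (Complex.ofReal '' Set.Ici (0:ℝ))ᶜ → ‖w‖ < ‖z‖ →
        Summable (fun m : ℤ => STerm t w z u m)) ∧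
    ContinuousOn (fun p : ℂ × ℂ × ℂ => SFun t p.1 p.2.1 p.2.2)
      {p : ℂ × ℂ × ℂ | ‖p.1‖ ∈ Set.Icc r R ∧ ‖p.2.1‖ ∈ Set.Icc r R ∧
        p.2.2 ∈ (Complex.ofReal '' Set.Ici (0:ℝ))ᶜ ∧ ‖p.1‖ < ‖p.2.1‖} ∧
    (∀ u ∈ (Complex.ofReal '' Set.Ici (0:ℝ))ᶜ, ∀ w : ℂ, ‖w‖ ∈ Set.Icc r R →
        DifferentiableOn ℂ (fun z => SFun t w z u)
          {ζ : ℂ | ‖ζ‖ ∈ Set.Icc r R ∧ ‖w‖ < ‖ζ‖}) ∧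
    (∀ u ∈ (Complex.ofReal '' Set.Ici (0:ℝ))ᶜ, ∀ z : ℂ, ‖z‖ ∈ Set.Icc r R →
        DifferentiableOn ℂ (fun w => SFun t w z u)
          {ζ : ℂ | ‖ζ‖ ∈ Set.Icc r R ∧ ‖ζ‖ < ‖z‖}) ∧
    (∀ w z : ℂ, ‖w‖ ∈ Set.Icc r R → ‖z‖ ∈ Set.Icc r R →
        ‖w‖ < ‖z‖ →
        DifferentiableOn ℂ (fun u => SFun t w z u) (Complex.ofReal '' Set.Ici (0:ℝ))ᶜ) := by
  have hL : Real.log t < 0 := Real.log_neg ht.1 ht.2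
  have hLne : Real.log t ≠ 0 := ne_of_lt hL
  have hLCne : ((Real.log t : ℝ) : ℂ) ≠ 0 := by exact_mod_cast hLne
  set L : ℝ := Real.log t with hLdef
  -- re of the principal A
  have hAre : ∀ w z : ℂ, ((Complex.log w - Complex.log z) / (L : ℂ)).re
      = (Real.log (‖w‖) - Real.log (‖z‖)) / L := by
    intro w z
    rw [(A_re_im L hLne _).1, Complex.sub_re, Complex.log_re, Complex.log_re]
  have hAim : ∀ w z : ℂ, |((Complex.log w - Complex.log z) / (L : ℂ)).im| ≤ 2 * cc L := by
    intro w z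
    apply Aim_bound hL
    rw [Complex.sub_im, Complex.log_im, Complex.log_im]
    have h1 := Complex.abs_arg_le_pi w
    have h2 := Complex.abs_arg_le_pi z
    have := abs_sub w.arg z.arg
    have hπ := Real.pi_pos
    calc |w.arg - z.arg| ≤ |w.arg| + |z.arg| := abs_sub _ _
      _ ≤ 4 * Real.pi := by linarith
  refine ⟨?_, ?_, ?_, ?_, ?_⟩
  -- Part 1: summability
  · intro w z u hw hz hu hlt
    have hslit := neg_mem_slitPlane_of hu
    set A := (Complex.log w - Complex.log z) / (L : ℂ) with hA
    have hv : A.re ∈ Set.Ioo (0:ℝ) 1 := by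
      rw [hA, hAre w z]; exact v_mem_Ioo ht hr htR hw hz hlt
    set ε := min A.re (1 - A.re) / 2 with hε
    have hε0 : 0 < ε := by
      rw [hε]; rcases hv with ⟨h1, h2⟩
      have : 0 < min A.re (1 - A.re) := lt_min h1 (by linarith)
      linarith
    have hε1 : ε ≤ 1/2 := by
      rw [hε]
      have : min A.re (1 - A.re) ≤ A.re := min_le_left _ _
      have h2 : min A.re (1 - A.re) ≤ 1 - A.re := min_le_right _ _
      rcases hv with ⟨h3, h4⟩
      cases le_total A.re (1 - A.re) with
      | inl h => rw [min_eq_left h]; linarith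
      | inr h => rw [min_eq_right h]; linarith
    have hA1 : ε ≤ A.re := by
      rw [hε]
      have := min_le_left A.re (1 - A.re)
      linarith [hε0]
    have hA2 : A.re ≤ 1 - ε := by
      rw [hε]
      have := min_le_right A.re (1 - A.re)
      linarith
    set θ := |(Complex.log (-u)).im| with hθdef
    have hθpi : θ < Real.pi := by
      rw [hθdef, Complex.log_im]; exact abs_arg_lt_pi_of_slit hslit
    have heq : (fun m : ℤ => STerm t w z u m) = fun m => TT L A u m := by
      funext m; rw [STerm_eq_TT]
    rw [heq]
    apply Summable.of_norm_bounded
      (summable_maj (Cb L ε (|(Complex.log (-u)).re|) θ) (rho L θ) (le_of_lt (rho_pos L θ))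
        (rho_lt_one hL hθpi))
    intro m
    exact TT_bound L hL ε _ θ hε0 hε1 (abs_nonneg _) hθpi A u
      (Complex.slitPlane_ne_zero hslit) hA1 hA2 (hA ▸ hAim w z) le_rfl le_rfl m
  -- Part 2: joint continuity
  · intro p₀ hp₀
    obtain ⟨hw₀, hz₀, hu₀, hlt₀⟩ := hp₀
    have hw₀ne : p₀.1 ≠ 0 := by
      intro h; rw [h] at hw₀; simp only [norm_zero] at hw₀; linarith [hw₀.1]
    have hz₀ne : p₀.2.1 ≠ 0 := by
      intro h; rw [h] at hz₀; simp only [norm_zero] at hz₀; linarith [hz₀.1]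
    have hslit₀ := neg_mem_slitPlane_of hu₀
    obtain ⟨ℓ₁, hℓ₁⟩ := exists_branch p₀.1 hw₀ne
    obtain ⟨ℓ₂, hℓ₂⟩ := exists_branch p₀.2.1 hz₀ne
    obtain ⟨hd₁, ⟨k₁₀, hk₁₀⟩, _⟩ := hℓ₁.self_of_nhds
    obtain ⟨hd₂, ⟨k₂₀, hk₂₀⟩, _⟩ := hℓ₂.self_of_nhds
    set fA : ℂ × ℂ × ℂ → ℂ := fun p => (ℓ₁ p.1 - ℓ₂ p.2.1) / (L : ℂ) with hfA
    set fu : ℂ × ℂ × ℂ → ℂ := fun p => p.2.2 with hfu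
    have hfAre₀ : (fA p₀).re
        = (Real.log (‖p₀.1‖) - Real.log (‖p₀.2.1‖)) / L := by
      simp only [hfA]
      rw [(A_re_im L hLne _).1, Complex.sub_re, branch_re hk₁₀, branch_re hk₂₀]
    have hv : (fA p₀).re ∈ Set.Ioo (0:ℝ) 1 := by
      rw [hfAre₀]; exact v_mem_Ioo ht hr htR hw₀ hz₀ hlt₀
    set v₀ := (fA p₀).re
    set ε := min v₀ (1 - v₀) / 2 with hε
    have hε0 : 0 < ε := by
      rw [hε]; rcases hv with ⟨h1, h2⟩
      have : 0 < min v₀ (1 - v₀) := lt_min h1 (by linarith)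
      linarith
    have hε1 : ε ≤ 1/2 := by
      rw [hε]
      rcases hv with ⟨h3, h4⟩
      cases le_total v₀ (1 - v₀) with
      | inl h => rw [min_eq_left h]; linarith
      | inr h => rw [min_eq_right h]; linarith
    have hεv1 : ε < v₀ := by
      rw [hε]; have := min_le_left v₀ (1 - v₀); linarith [hε0]
    have hεv2 : v₀ < 1 - ε := by
      rw [hε]; have := min_le_right v₀ (1 - v₀); linarith [hε0]
    set θ := (|(Complex.log (-p₀.2.2)).im| + Real.pi) / 2 with hθdef
    set M := |(Complex.log (-p₀.2.2)).re| + 1 with hM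
    have habs₀ : |(Complex.log (-p₀.2.2)).im| < Real.pi := by
      rw [Complex.log_im]; exact abs_arg_lt_pi_of_slit hslit₀
    have hθpi : θ < Real.pi := by rw [hθdef]; linarith
    have hθ0 : 0 ≤ θ := by
      rw [hθdef]
      have := abs_nonneg ((Complex.log (-p₀.2.2)).im)
      have := Real.pi_pos
      linarith
    -- continuity of coordinate maps
    have hc1 : Continuous (fun p : ℂ × ℂ × ℂ => p.1) := continuous_fst
    have hc2 : Continuous (fun p : ℂ × ℂ × ℂ => p.2.1) := continuous_fst.comp continuous_snd
    have hc3 : Continuous (fun p : ℂ × ℂ × ℂ => p.2.2) := continuous_snd.comp continuous_snd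
    -- eventual branch facts pulled back
    have hev_w : ∀ᶠ p : ℂ × ℂ × ℂ in 𝓝 p₀, DifferentiableAt ℂ ℓ₁ p.1 ∧
        (∃ k : ℤ, ℓ₁ p.1 = Complex.log p.1 + (k : ℂ) * (2 * Real.pi * Complex.I)) ∧
        |(ℓ₁ p.1).im| ≤ 2 * Real.pi :=
      hc1.continuousAt.eventually hℓ₁
    have hev_z : ∀ᶠ p : ℂ × ℂ × ℂ in 𝓝 p₀, DifferentiableAt ℂ ℓ₂ p.2.1 ∧
        (∃ k : ℤ, ℓ₂ p.2.1 = Complex.log p.2.1 + (k : ℂ) * (2 * Real.pi * Complex.I)) ∧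
        |(ℓ₂ p.2.1).im| ≤ 2 * Real.pi :=
      hc2.continuousAt.eventually hℓ₂
    -- u-conditions
    have hlogcont : ContinuousAt (fun u : ℂ => Complex.log (-u)) p₀.2.2 :=
      (continuousAt_clog hslit₀).comp (continuous_neg.continuousAt)
    have hev_u : ∀ᶠ u in 𝓝 p₀.2.2, -u ∈ Complex.slitPlane ∧
        |(Complex.log (-u)).re| ≤ M ∧ |(Complex.log (-u)).im| ≤ θ := by
      have h3 : ∀ᶠ u in 𝓝 p₀.2.2, -u ∈ Complex.slitPlane :=
        (continuous_neg.continuousAt).eventually_mem (Complex.isOpen_slitPlane.mem_nhds hslit₀)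
      have h1 : ∀ᶠ u in 𝓝 p₀.2.2, |(Complex.log (-u)).im| ≤ θ := by
        have hc : ContinuousAt (fun u : ℂ => |(Complex.log (-u)).im|) p₀.2.2 :=
          (_root_.continuous_abs.continuousAt).comp (Complex.continuous_im.continuousAt.comp hlogcont)
        have hlt : |(Complex.log (-p₀.2.2)).im| ∈ Set.Iio θ := by
          rw [hθdef]; simp only [Set.mem_Iio]; linarith
        filter_upwards [hc.eventually_mem (isOpen_Iio.mem_nhds hlt)] with u hu using le_of_lt hu
      have h2 : ∀ᶠ u in 𝓝 p₀.2.2, |(Complex.log (-u)).re| ≤ M := by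
        have hc : ContinuousAt (fun u : ℂ => |(Complex.log (-u)).re|) p₀.2.2 :=
          (_root_.continuous_abs.continuousAt).comp (Complex.continuous_re.continuousAt.comp hlogcont)
        have hlt : |(Complex.log (-p₀.2.2)).re| ∈ Set.Iio M := by
          rw [hM]; simp only [Set.mem_Iio]; linarith
        filter_upwards [hc.eventually_mem (isOpen_Iio.mem_nhds hlt)] with u hu using le_of_lt hu
      filter_upwards [h1, h2, h3] with u a b c using ⟨c, b, a⟩
    have hev_u' : ∀ᶠ p : ℂ × ℂ × ℂ in 𝓝 p₀, -p.2.2 ∈ Complex.slitPlane ∧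
        |(Complex.log (-p.2.2)).re| ≤ M ∧ |(Complex.log (-p.2.2)).im| ≤ θ :=
      hc3.continuousAt.eventually hev_u
    -- re-condition eventual
    have hℓ₁cont : ContinuousAt ℓ₁ p₀.1 := hd₁.continuousAt
    have hℓ₂cont : ContinuousAt ℓ₂ p₀.2.1 := hd₂.continuousAt
    have ha1 : ContinuousAt (fun p : ℂ × ℂ × ℂ => ℓ₁ p.1) p₀ :=
      hℓ₁cont.comp hc1.continuousAt
    have ha2 : ContinuousAt (fun p : ℂ × ℂ × ℂ => ℓ₂ p.2.1) p₀ :=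
      ContinuousAt.comp (g := ℓ₂) (f := fun p : ℂ × ℂ × ℂ => p.2.1) hℓ₂cont hc2.continuousAt
    have hfAcont : ContinuousAt fA p₀ := by
      apply ContinuousAt.div_const
      exact ha1.sub ha2
    have hre_ev : ∀ᶠ p : ℂ × ℂ × ℂ in 𝓝 p₀, (fA p).re ∈ Set.Ioo ε (1 - ε) := by
      apply (Complex.continuous_re.continuousAt.comp hfAcont).eventually_mem
      exact isOpen_Ioo.mem_nhds ⟨hεv1, hεv2⟩
    have hne_w : ∀ᶠ p : ℂ × ℂ × ℂ in 𝓝 p₀, p.1 ≠ 0 :=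
      hc1.continuousAt.eventually (eventually_ne_nhds hw₀ne)
    have hne_z : ∀ᶠ p : ℂ × ℂ × ℂ in 𝓝 p₀, p.2.1 ≠ 0 :=
      hc2.continuousAt.eventually (eventually_ne_nhds hz₀ne)
    have hbig : ∀ᶠ p : ℂ × ℂ × ℂ in 𝓝 p₀, ContinuousAt fA p ∧ Conds L ε M θ (fA p) (fu p) ∧
        (∃ k : ℤ, fA p = (Complex.log p.1 - Complex.log p.2.1) / (L : ℂ) + (k : ℂ) * qc L) := by
      filter_upwards [hev_w, hev_z, hev_u', hre_ev] with p hpw hpz hpu hre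
      obtain ⟨hdw, ⟨ka, hka⟩, himw⟩ := hpw
      obtain ⟨hdz, ⟨kb, hkb⟩, himz⟩ := hpz
      obtain ⟨hu1, hu2, hu3⟩ := hpu
      refine ⟨?_, ⟨hu1, le_of_lt hre.1, le_of_lt hre.2, ?_, hu2, hu3⟩, ⟨ka - kb, ?_⟩⟩
      · apply ContinuousAt.div_const
        have b1 : ContinuousAt (fun q : ℂ × ℂ × ℂ => ℓ₁ q.1) p :=
          (hdw.continuousAt).comp hc1.continuousAt
        have b2 : ContinuousAt (fun q : ℂ × ℂ × ℂ => ℓ₂ q.2.1) p :=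
          ContinuousAt.comp (g := ℓ₂) (f := fun q : ℂ × ℂ × ℂ => q.2.1)
            (hdz.continuousAt) hc2.continuousAt
        exact b1.sub b2
      · simp only [hfA]
        apply Aim_bound hL
        rw [Complex.sub_im]
        calc |(ℓ₁ p.1).im - (ℓ₂ p.2.1).im| ≤ |(ℓ₁ p.1).im| + |(ℓ₂ p.2.1).im| := abs_sub _ _
          _ ≤ 4 * Real.pi := by linarith
      · simp only [hfA]
        rw [hka, hkb]
        unfold qc
        push_cast
        field_simp
        ring
    obtain ⟨U, hUsub, hUopen, hUmem⟩ := eventually_nhds_iff.mp hbig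
    have hcontU : ContinuousOn (fun p => GG L (fA p) (fu p)) U := by
      apply GG_cont L hL ε M θ hε0 hε1 hθ0 hθpi U fA fu
      · intro x hx; exact (hUsub x hx).1
      · intro x hx; exact hc3.continuousAt
      · intro x hx; exact (hUsub x hx).2.1
    have hGAt : ContinuousAt (fun p => GG L (fA p) (fu p)) p₀ :=
      hcontU.continuousAt (hUopen.mem_nhds hUmem)
    have hcongr : (fun p : ℂ × ℂ × ℂ => GG L (fA p) (fu p)) =ᶠ[𝓝 p₀]
        (fun p : ℂ × ℂ × ℂ => SFun t p.1 p.2.1 p.2.2) := by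
      filter_upwards [eventually_nhds_iff.mpr ⟨U, hUsub, hUopen, hUmem⟩] with p hp
      obtain ⟨_, _, ⟨k, hk⟩⟩ := hp
      rw [SFun_eq_GG]
      exact GG_congr L _ _ _ ⟨k, hk⟩
    exact (hGAt.congr hcongr).continuousWithinAt

  -- Part 3: z-holomorphy
  · intro u hu w hw
    have hslit := neg_mem_slitPlane_of hu
    set θ := |(Complex.log (-u)).im| with hθdef
    have hθpi : θ < Real.pi := by
      rw [hθdef, Complex.log_im]; exact abs_arg_lt_pi_of_slit hslit
    intro ζ₀ hζ₀
    obtain ⟨hζ₀icc, hζ₀lt⟩ := hζ₀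
    have hζ₀ne : ζ₀ ≠ 0 := by
      intro h
      rw [h] at hζ₀icc
      simp only [norm_zero] at hζ₀icc
      linarith [hζ₀icc.1]
    obtain ⟨ℓ, hℓ⟩ := exists_branch ζ₀ hζ₀ne
    have hℓ₀ := hℓ.self_of_nhds
    obtain ⟨hℓdiff₀, ⟨k₀, hk₀⟩, _⟩ := hℓ₀
    set fA : ℂ → ℂ := fun ζ => (Complex.log w - ℓ ζ) / (L : ℂ) with hfA
    have hfAre₀ : (fA ζ₀).re = (Real.log (‖w‖) - Real.log (‖ζ₀‖)) / L := by
      rw [hfA]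
      simp only
      rw [(A_re_im L hLne _).1, Complex.sub_re, Complex.log_re, branch_re hk₀]
    have hv : (fA ζ₀).re ∈ Set.Ioo (0:ℝ) 1 := by
      rw [hfAre₀]; exact v_mem_Ioo ht hr htR hw hζ₀icc hζ₀lt
    set v₀ := (fA ζ₀).re
    set ε := min v₀ (1 - v₀) / 2 with hε
    have hε0 : 0 < ε := by
      rw [hε]; rcases hv with ⟨h1, h2⟩
      have : 0 < min v₀ (1 - v₀) := lt_min h1 (by linarith)
      linarith
    have hε1 : ε ≤ 1/2 := by
      rw [hε]
      rcases hv with ⟨h3, h4⟩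
      cases le_total v₀ (1 - v₀) with
      | inl h => rw [min_eq_left h]; linarith
      | inr h => rw [min_eq_right h]; linarith
    have hεv1 : ε < v₀ := by
      rw [hε]
      have := min_le_left v₀ (1 - v₀); linarith [hε0]
    have hεv2 : v₀ < 1 - ε := by
      rw [hε]
      have := min_le_right v₀ (1 - v₀); linarith [hε0]
    -- continuity of re of fA at ζ₀
    have hℓcont : ContinuousAt ℓ ζ₀ := hℓdiff₀.continuousAt
    have hfAcont : ContinuousAt fA ζ₀ := by
      rw [hfA]; exact (continuousAt_const.sub hℓcont).div_const _
    have hrecont : ContinuousAt (fun ζ => (fA ζ).re) ζ₀ :=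
      Complex.continuous_re.continuousAt.comp hfAcont
    have hre_ev : ∀ᶠ ζ in 𝓝 ζ₀, (fA ζ).re ∈ Set.Ioo ε (1 - ε) := by
      apply hrecont.eventually_mem
      apply isOpen_Ioo.mem_nhds
      exact ⟨hεv1, hεv2⟩
    have hne_ev : ∀ᶠ ζ in 𝓝 ζ₀, ζ ≠ 0 := eventually_ne_nhds hζ₀ne
    have hbig : ∀ᶠ ζ in 𝓝 ζ₀, DifferentiableAt ℂ fA ζ ∧ Conds L ε (|(Complex.log (-u)).re|) θ (fA ζ) u
        ∧ (∃ k : ℤ, fA ζ = (Complex.log w - Complex.log ζ) / (L : ℂ) + (k : ℂ) * qc L)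
        ∧ ζ ≠ 0 := by
      filter_upwards [hℓ, hre_ev, hne_ev] with ζ hζ hre hne
      obtain ⟨hdiff, ⟨k, hk⟩, him⟩ := hζ
      refine ⟨?_, ⟨hslit, le_of_lt hre.1, le_of_lt hre.2, ?_, le_rfl, le_rfl⟩, ⟨-k, ?_⟩, hne⟩
      · rw [hfA]
        exact (differentiableAt_const _).sub hdiff |>.div_const _
      · rw [hfA]
        apply Aim_bound hL
        rw [Complex.sub_im, Complex.log_im]
        have h1 := Complex.abs_arg_le_pi w
        have hπ := Real.pi_pos
        calc |w.arg - (ℓ ζ).im| ≤ |w.arg| + |(ℓ ζ).im| := abs_sub _ _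
          _ ≤ 4 * Real.pi := by linarith
      · simp only [hfA]
        rw [hk]
        unfold qc
        push_cast
        field_simp
        ring
    obtain ⟨U, hUsub, hUopen, hUmem⟩ := eventually_nhds_iff.mp hbig
    have hdiffU : DifferentiableOn ℂ (fun ζ => GG L (fA ζ) u) U := by
      apply GG_diff L hL ε _ θ hε0 hε1 (abs_nonneg _) hθpi U hUopen fA (fun _ => u)
      · intro x hx; exact (hUsub x hx).1
      · intro x hx; exact differentiableAt_const _
      · intro x hx; exact (hUsub x hx).2.1
    have hg : DifferentiableAt ℂ (fun ζ => GG L (fA ζ) u) ζ₀ :=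
      hdiffU.differentiableAt (hUopen.mem_nhds hUmem)
    have hcongr : (fun ζ => SFun t w ζ u) =ᶠ[𝓝 ζ₀] (fun ζ => GG L (fA ζ) u) := by
      filter_upwards [eventually_nhds_iff.mpr ⟨U, hUsub, hUopen, hUmem⟩] with ζ hζ
      obtain ⟨_, _, ⟨k, hk⟩, hne⟩ := hζ
      rw [SFun_eq_GG]
      exact (GG_congr L _ _ u ⟨k, hk⟩).symm
    exact (hg.congr_of_eventuallyEq hcongr).differentiableWithinAt
  -- Part 4: w-holomorphy
  · intro u hu z hz
    have hslit := neg_mem_slitPlane_of hu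
    set θ := |(Complex.log (-u)).im| with hθdef
    have hθpi : θ < Real.pi := by
      rw [hθdef, Complex.log_im]; exact abs_arg_lt_pi_of_slit hslit
    intro ζ₀ hζ₀
    obtain ⟨hζ₀icc, hζ₀lt⟩ := hζ₀
    have hζ₀ne : ζ₀ ≠ 0 := by
      intro h
      rw [h] at hζ₀icc
      simp only [norm_zero] at hζ₀icc
      linarith [hζ₀icc.1]
    obtain ⟨ℓ, hℓ⟩ := exists_branch ζ₀ hζ₀ne
    have hℓ₀ := hℓ.self_of_nhds
    obtain ⟨hℓdiff₀, ⟨k₀, hk₀⟩, _⟩ := hℓ₀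
    set fA : ℂ → ℂ := fun ζ => (ℓ ζ - Complex.log z) / (L : ℂ) with hfA
    have hfAre₀ : (fA ζ₀).re = (Real.log (‖ζ₀‖) - Real.log (‖z‖)) / L := by
      rw [hfA]
      simp only
      rw [(A_re_im L hLne _).1, Complex.sub_re, Complex.log_re, branch_re hk₀]
    have hv : (fA ζ₀).re ∈ Set.Ioo (0:ℝ) 1 := by
      rw [hfAre₀]; exact v_mem_Ioo ht hr htR hζ₀icc hz hζ₀lt
    set v₀ := (fA ζ₀).re
    set ε := min v₀ (1 - v₀) / 2 with hε
    have hε0 : 0 < ε := by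
      rw [hε]; rcases hv with ⟨h1, h2⟩
      have : 0 < min v₀ (1 - v₀) := lt_min h1 (by linarith)
      linarith
    have hε1 : ε ≤ 1/2 := by
      rw [hε]
      rcases hv with ⟨h3, h4⟩
      cases le_total v₀ (1 - v₀) with
      | inl h => rw [min_eq_left h]; linarith
      | inr h => rw [min_eq_right h]; linarith
    have hεv1 : ε < v₀ := by
      rw [hε]
      have := min_le_left v₀ (1 - v₀); linarith [hε0]
    have hεv2 : v₀ < 1 - ε := by
      rw [hε]
      have := min_le_right v₀ (1 - v₀); linarith [hε0]
    have hℓcont : ContinuousAt ℓ ζ₀ := hℓdiff₀.continuousAt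
    have hfAcont : ContinuousAt fA ζ₀ := by
      rw [hfA]; exact (hℓcont.sub continuousAt_const).div_const _
    have hrecont : ContinuousAt (fun ζ => (fA ζ).re) ζ₀ :=
      Complex.continuous_re.continuousAt.comp hfAcont
    have hre_ev : ∀ᶠ ζ in 𝓝 ζ₀, (fA ζ).re ∈ Set.Ioo ε (1 - ε) := by
      apply hrecont.eventually_mem
      apply isOpen_Ioo.mem_nhds
      exact ⟨hεv1, hεv2⟩
    have hne_ev : ∀ᶠ ζ in 𝓝 ζ₀, ζ ≠ 0 := eventually_ne_nhds hζ₀ne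
    have hbig : ∀ᶠ ζ in 𝓝 ζ₀, DifferentiableAt ℂ fA ζ ∧ Conds L ε (|(Complex.log (-u)).re|) θ (fA ζ) u
        ∧ (∃ k : ℤ, fA ζ = (Complex.log ζ - Complex.log z) / (L : ℂ) + (k : ℂ) * qc L)
        ∧ ζ ≠ 0 := by
      filter_upwards [hℓ, hre_ev, hne_ev] with ζ hζ hre hne
      obtain ⟨hdiff, ⟨k, hk⟩, him⟩ := hζ
      refine ⟨?_, ⟨hslit, le_of_lt hre.1, le_of_lt hre.2, ?_, le_rfl, le_rfl⟩, ⟨k, ?_⟩, hne⟩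
      · rw [hfA]
        exact (hdiff.sub (differentiableAt_const _)).div_const _
      · rw [hfA]
        apply Aim_bound hL
        rw [Complex.sub_im, Complex.log_im]
        have h1 := Complex.abs_arg_le_pi z
        have hπ := Real.pi_pos
        calc |(ℓ ζ).im - z.arg| ≤ |(ℓ ζ).im| + |z.arg| := abs_sub _ _
          _ ≤ 4 * Real.pi := by linarith
      · simp only [hfA]
        rw [hk]
        unfold qc
        push_cast
        field_simp
        ring
    obtain ⟨U, hUsub, hUopen, hUmem⟩ := eventually_nhds_iff.mp hbig
    have hdiffU : DifferentiableOn ℂ (fun ζ => GG L (fA ζ) u) U := by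
      apply GG_diff L hL ε _ θ hε0 hε1 (abs_nonneg _) hθpi U hUopen fA (fun _ => u)
      · intro x hx; exact (hUsub x hx).1
      · intro x hx; exact differentiableAt_const _
      · intro x hx; exact (hUsub x hx).2.1
    have hg : DifferentiableAt ℂ (fun ζ => GG L (fA ζ) u) ζ₀ :=
      hdiffU.differentiableAt (hUopen.mem_nhds hUmem)
    have hcongr : (fun ζ => SFun t ζ z u) =ᶠ[𝓝 ζ₀] (fun ζ => GG L (fA ζ) u) := by
      filter_upwards [eventually_nhds_iff.mpr ⟨U, hUsub, hUopen, hUmem⟩] with ζ hζ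
      obtain ⟨_, _, ⟨k, hk⟩, hne⟩ := hζ
      rw [SFun_eq_GG]
      exact (GG_congr L _ _ u ⟨k, hk⟩).symm
    exact (hg.congr_of_eventuallyEq hcongr).differentiableWithinAt
  -- Part 5: u-holomorphy
  · intro w z hw hz hlt
    set A := (Complex.log w - Complex.log z) / (L : ℂ) with hA
    have hv : A.re ∈ Set.Ioo (0:ℝ) 1 := by
      rw [hA, hAre w z]; exact v_mem_Ioo ht hr htR hw hz hlt
    set ε := min A.re (1 - A.re) / 2 with hε
    have hε0 : 0 < ε := by
      rw [hε]; rcases hv with ⟨h1, h2⟩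
      have : 0 < min A.re (1 - A.re) := lt_min h1 (by linarith)
      linarith
    have hε1 : ε ≤ 1/2 := by
      rw [hε]
      rcases hv with ⟨h3, h4⟩
      cases le_total A.re (1 - A.re) with
      | inl h => rw [min_eq_left h]; linarith
      | inr h => rw [min_eq_right h]; linarith
    have hA1 : ε ≤ A.re := by
      rw [hε]; have := min_le_left A.re (1 - A.re); linarith [hε0]
    have hA2 : A.re ≤ 1 - ε := by
      rw [hε]; have := min_le_right A.re (1 - A.re); linarith [hε0]
    have heqf : (fun u => SFun t w z u) = fun u => GG L A u := by
      funext u; rw [SFun_eq_GG]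
    rw [heqf]
    intro u₀ hu₀
    have hslit₀ := neg_mem_slitPlane_of hu₀
    set θ := (|(Complex.log (-u₀)).im| + Real.pi) / 2 with hθdef
    set M := |(Complex.log (-u₀)).re| + 1 with hM
    have habs₀ : |(Complex.log (-u₀)).im| < Real.pi := by
      rw [Complex.log_im]; exact abs_arg_lt_pi_of_slit hslit₀
    have hθpi : θ < Real.pi := by rw [hθdef]; linarith
    have hθ0 : 0 ≤ θ := by
      rw [hθdef]
      have := abs_nonneg ((Complex.log (-u₀)).im)
      have := Real.pi_pos
      linarith
    have hlogcont : ContinuousAt (fun u : ℂ => Complex.log (-u)) u₀ :=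
      (continuousAt_clog hslit₀).comp (continuous_neg.continuousAt)
    have hev1 : ∀ᶠ u in 𝓝 u₀, |(Complex.log (-u)).im| ≤ θ := by
      have hc : ContinuousAt (fun u : ℂ => |(Complex.log (-u)).im|) u₀ :=
        (_root_.continuous_abs.continuousAt).comp (Complex.continuous_im.continuousAt.comp hlogcont)
      have := hc.eventually_mem (isOpen_Iio.mem_nhds (by rw [hθdef]; simpa using by linarith : |(Complex.log (-u₀)).im| ∈ Set.Iio θ))
      filter_upwards [this] with u hu using le_of_lt hu
    have hev2 : ∀ᶠ u in 𝓝 u₀, |(Complex.log (-u)).re| ≤ M := by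
      have hc : ContinuousAt (fun u : ℂ => |(Complex.log (-u)).re|) u₀ :=
        (_root_.continuous_abs.continuousAt).comp (Complex.continuous_re.continuousAt.comp hlogcont)
      have hlt : |(Complex.log (-u₀)).re| ∈ Set.Iio M := by rw [hM]; simp only [Set.mem_Iio]; linarith
      have := hc.eventually_mem (isOpen_Iio.mem_nhds hlt)
      filter_upwards [this] with u hu using le_of_lt hu
    have hev3 : ∀ᶠ u in 𝓝 u₀, -u ∈ Complex.slitPlane := by
      exact (continuous_neg.continuousAt).eventually_mem (Complex.isOpen_slitPlane.mem_nhds hslit₀)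
    have hbig : ∀ᶠ u in 𝓝 u₀, Conds L ε M θ A u := by
      filter_upwards [hev1, hev2, hev3] with u h1 h2 h3
      exact ⟨h3, hA1, hA2, hA ▸ hAim w z, h2, h1⟩
    obtain ⟨U, hUsub, hUopen, hUmem⟩ := eventually_nhds_iff.mp hbig
    have hdiffU : DifferentiableOn ℂ (fun u => GG L A u) U := by
      apply GG_diff L hL ε M θ hε0 hε1 hθ0 hθpi U hUopen (fun _ => A) (fun u => u)
      · intro x hx; exact differentiableAt_const _
      · intro x hx; exact differentiableAt_id
      · intro x hx; exact hUsub x hx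
    exact (hdiffU.differentiableAt (hUopen.mem_nhds hUmem)).differentiableWithinAt
end

section
/- Let M, n ∈ ℕ, N ∈ ℤ_{≥0}, t ∈ (0,1) and R > 0. Suppose a, z ∈ ℂ satisfy 0 < |a| = |z| ≤ 1, and that z_1,…,z_N, w_1,…,w_N, x_1,…,x_n, y_1,…,y_M ∈ ℂ satisfy |z_i| ≥ |z|, |w_i| ≥ |z|, |x_j| ≤ R, |y_k| ≤ 1 for all i, j, k. Then for every u ∈ ℂ and every integer c ≥ 1, one has |u^c/(a − z·t^c) · ∏_{k=1}^M 1/(1 − z·y_k·t^c) · ∏_{j=1}^n (1 − x_j·z^{−1}·t^{−c}) · ∏_{i=1}^N (z·w_i^{−1}·t^c; t)_∞/(z·z_i^{−1}·t^c; t)_∞| ≤ (−t;t)_∞^N · (1 + R/|a|)^n · |u|^c · t^{−cn} / (|a|·(1−t)^{M+1}·(t;t)_∞^N). In particular all factors on the left are well defined and nonzero where required. -/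
noncomputable def cPoch (a : ℂ) (t : ℝ) : ℂ := ∏' m : ℕ, (1 - a * (t : ℂ) ^ m)

noncomputable def rPoch (a t : ℝ) : ℝ := ∏' m : ℕ, (1 - a * t ^ m)

noncomputable def hTerm (M n N : ℕ) (t : ℝ) (a z : ℂ)
    (zs ws : Fin N → ℂ) (xs : Fin n → ℂ) (ys : Fin M → ℂ) (u : ℂ) (c : ℕ) : ℂ :=
  u ^ c / (a - z * (t : ℂ) ^ c) * (∏ k : Fin M, (1 - z * ys k * (t : ℂ) ^ c)⁻¹) *
    (∏ j : Fin n, (1 - xs j * z⁻¹ * (t : ℂ) ^ (-(c : ℤ)))) *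
    ∏ i : Fin N, cPoch (z * (ws i)⁻¹ * (t : ℂ) ^ c) t / cPoch (z * (zs i)⁻¹ * (t : ℂ) ^ c) t

section Aux


variable {t : ℝ}

lemma rlog_bound {y : ℝ} (hy : |y| < 1) : |Real.log (1 - y)| ≤ |y| / (1 - |y|) := by
  have h0 : 0 < 1 - |y| := by linarith
  have hya : y ≤ |y| := le_abs_self y
  have h1 : 0 < 1 - y := by linarith
  rcases abs_cases (Real.log (1 - y)) with ⟨he, _⟩ | ⟨he, _⟩
  · rw [he]
    have := Real.log_le_sub_one_of_pos h1
    have h2 : -y ≤ |y| := neg_le_abs y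
    have h3 : |y| ≤ |y| / (1 - |y|) := by
      rw [le_div_iff₀ h0]; nlinarith [abs_nonneg y]
    linarith
  · rw [he]
    have hinv : Real.log ((1 - y)⁻¹) ≤ (1 - y)⁻¹ - 1 :=
      Real.log_le_sub_one_of_pos (by positivity)
    rw [Real.log_inv] at hinv
    have h4 : (1 - y)⁻¹ - 1 = y / (1 - y) := by field_simp; ring
    have h5 : y / (1 - y) ≤ |y| / (1 - |y|) := by
      rcases le_or_gt y 0 with hy0 | hy0
      · have : y / (1 - y) ≤ 0 := div_nonpos_of_nonpos_of_nonneg hy0 h1.le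
        exact this.trans (by positivity)
      · rw [abs_of_pos hy0]
    linarith

lemma rpos_fac (ht0 : 0 < t) (ht1 : t < 1) {a : ℝ} (ha : |a| ≤ t) (m : ℕ) :
    0 < 1 - a * t ^ m := by
  have h1 : |a * t ^ m| ≤ t := by
    rw [abs_mul, _root_.abs_pow, abs_of_pos ht0]
    calc |a| * t ^ m ≤ t * 1 :=
          mul_le_mul ha (pow_le_one₀ ht0.le ht1.le) (by positivity) ht0.le
      _ = t := mul_one t
  have := abs_le.mp h1
  linarith

lemma rlogsum (ht0 : 0 < t) (ht1 : t < 1) {a : ℝ} (ha : |a| ≤ t) :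
    Summable fun m : ℕ => Real.log (1 - a * t ^ m) := by
  apply Summable.of_norm_bounded (g := fun m : ℕ => (t / (1 - t)) * t ^ m)
    ((summable_geometric_of_lt_one ht0.le ht1).mul_left _)
  intro m
  have hy : |a * t ^ m| ≤ t * t ^ m := by
    rw [abs_mul, _root_.abs_pow, abs_of_pos ht0]
    exact mul_le_mul_of_nonneg_right ha (by positivity)
  have htm : t * t ^ m ≤ t := by
    calc t * t ^ m ≤ t * 1 := mul_le_mul_of_nonneg_left (pow_le_one₀ ht0.le ht1.le) ht0.le
      _ = t := mul_one t
  have hy1 : |a * t ^ m| < 1 := by linarith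
  calc ‖Real.log (1 - a * t ^ m)‖ = |Real.log (1 - a * t ^ m)| := rfl
    _ ≤ |a * t ^ m| / (1 - |a * t ^ m|) := rlog_bound hy1
    _ ≤ (t * t ^ m) / (1 - t) := by
        apply div_le_div₀ (by positivity) hy (by linarith)
        linarith
    _ = (t / (1 - t)) * t ^ m := by ring

lemma rmult (ht0 : 0 < t) (ht1 : t < 1) {a : ℝ} (ha : |a| ≤ t) :
    Multipliable (fun m : ℕ => 1 - a * t ^ m) :=
  Real.multipliable_of_summable_log (fun m => rpos_fac ht0 ht1 ha m) (rlogsum ht0 ht1 ha)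

lemma rtprod_pos (ht0 : 0 < t) (ht1 : t < 1) {a : ℝ} (ha : |a| ≤ t) :
    0 < ∏' m : ℕ, (1 - a * t ^ m) := by
  have := Real.rexp_tsum_eq_tprod (f := fun m => 1 - a * t ^ m)
    (fun m => rpos_fac ht0 ht1 ha m) (rlogsum ht0 ht1 ha)
  rw [← this]
  exact Real.exp_pos _

lemma cabs_fac (ht0 : 0 < t) {w : ℂ} (hw : ‖w‖ ≤ t) (m : ℕ) :
    ‖w * (t : ℂ) ^ m‖ ≤ t * t ^ m := by
  rw [norm_mul, norm_pow, Complex.norm_real, Real.norm_eq_abs, abs_of_pos ht0]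
  exact mul_le_mul_of_nonneg_right hw (by positivity)

lemma cmult (ht0 : 0 < t) (ht1 : t < 1) {w : ℂ} (hw : ‖w‖ ≤ t) :
    Multipliable (fun m : ℕ => (1 : ℂ) - w * (t : ℂ) ^ m) := by
  have htm : ∀ m : ℕ, t * t ^ m ≤ t := by
    intro m
    calc t * t ^ m ≤ t * 1 := mul_le_mul_of_nonneg_left (pow_le_one₀ ht0.le ht1.le) ht0.le
      _ = t := mul_one t
  have hlt : ∀ m : ℕ, ‖w * (t : ℂ) ^ m‖ < 1 := by
    intro m
    have h1 := cabs_fac ht0 hw m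
    have := htm m; linarith
  have hne : ∀ (_ : Unit) (m : ℕ), (1 : ℂ) - w * (t : ℂ) ^ m ≠ 0 := by
    intro _ m h
    have he : w * (t : ℂ) ^ m = 1 := by linear_combination -h
    have h2 := hlt m
    rw [he] at h2
    simp at h2
  have hsum : ∀ (_ : Unit), Summable fun m : ℕ => Complex.log (1 - w * (t : ℂ) ^ m) := by
    intro _
    apply Summable.of_norm_bounded (g := fun m : ℕ => (t ^ 2 * (1 - t)⁻¹ / 2 + t) * t ^ m)
      ((summable_geometric_of_lt_one ht0.le ht1).mul_left _)
    intro m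
    set z : ℂ := -(w * (t : ℂ) ^ m) with hz
    have hzn : ‖z‖ ≤ t * t ^ m := by rw [hz, norm_neg]; exact cabs_fac ht0 hw m
    have hzn1 : ‖z‖ < 1 := by rw [hz, norm_neg]; exact hlt m
    have key : ‖Complex.log (1 + z)‖ ≤ ‖z‖ ^ 2 * (1 - ‖z‖)⁻¹ / 2 + ‖z‖ :=
      Complex.norm_log_one_add_le hzn1
    have heq : (1 : ℂ) - w * (t : ℂ) ^ m = 1 + z := by rw [hz]; ring
    rw [heq]
    have htm1 : t ^ m ≤ 1 := pow_le_one₀ ht0.le ht1.le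
    have hzt : ‖z‖ ≤ t := by
      have : t * t ^ m ≤ t * 1 := mul_le_mul_of_nonneg_left htm1 ht0.le
      linarith
    have hinv : (1 - ‖z‖)⁻¹ ≤ (1 - t)⁻¹ := by
      apply inv_anti₀ (by linarith) (by linarith)
    have h2 : ‖z‖ ^ 2 * (1 - ‖z‖)⁻¹ / 2 ≤ (t * t ^ m) * t * (1 - t)⁻¹ / 2 := by
      have hz0 : (0:ℝ) ≤ ‖z‖ := norm_nonneg z
      have hsq : ‖z‖ ^ 2 ≤ (t * t ^ m) * t := by nlinarith
      have hmono : ‖z‖ ^ 2 * (1 - ‖z‖)⁻¹ ≤ ((t * t ^ m) * t) * (1 - t)⁻¹ :=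
        mul_le_mul hsq hinv (inv_nonneg.mpr (by linarith)) (by positivity)
      linarith
    calc ‖Complex.log (1 + z)‖ ≤ ‖z‖ ^ 2 * (1 - ‖z‖)⁻¹ / 2 + ‖z‖ := key
      _ ≤ (t * t ^ m) * t * (1 - t)⁻¹ / 2 + t * t ^ m := add_le_add h2 hzn
      _ = (t ^ 2 * (1 - t)⁻¹ / 2 + t) * t ^ m := by ring
  exact Complex.multipliable_of_summable_log (hsum ())


lemma rtprod_le_rtprod {f g : ℕ → ℝ} (h0 : ∀ i, 0 ≤ f i) (h : ∀ i, f i ≤ g i)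
    (hf : Multipliable f) (hg : Multipliable g) : ∏' i, f i ≤ ∏' i, g i :=
  le_of_tendsto_of_tendsto' hf.hasProd hg.hasProd
    (fun s => Finset.prod_le_prod (fun i _ => h0 i) (fun i _ => h i))

lemma cpoch_le {t : ℝ} (ht0 : 0 < t) (ht1 : t < 1) {w : ℂ} (hw : ‖w‖ ≤ t) :
    ‖cPoch w t‖ ≤ rPoch (-t) t := by
  have hm := cmult ht0 ht1 hw
  have habs : ‖cPoch w t‖ = ∏' m : ℕ, ‖1 - w * (t : ℂ) ^ m‖ :=
    hm.norm_tprod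
  have hmabs : Multipliable (fun m : ℕ => ‖1 - w * (t : ℂ) ^ m‖) := by
    have := hm.norm
    simpa using this
  rw [habs]
  refine rtprod_le_rtprod (fun m => norm_nonneg _) (fun m => ?_) hmabs
    (rmult ht0 ht1 (by rw [abs_neg, abs_of_pos ht0]))
  have h1 : ‖1 - w * (t : ℂ) ^ m‖ ≤ 1 + ‖w * (t : ℂ) ^ m‖ := by
    have := norm_sub_le (1 : ℂ) (w * (t : ℂ) ^ m)
    simpa using this
  have h2 := cabs_fac ht0 hw m
  have : 1 - -t * t ^ m = 1 + t * t ^ m := by ring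
  rw [this]
  linarith

lemma cpoch_ge {t : ℝ} (ht0 : 0 < t) (ht1 : t < 1) {w : ℂ} (hw : ‖w‖ ≤ t) :
    rPoch t t ≤ ‖cPoch w t‖ := by
  have hm := cmult ht0 ht1 hw
  have habs : ‖cPoch w t‖ = ∏' m : ℕ, ‖1 - w * (t : ℂ) ^ m‖ :=
    hm.norm_tprod
  have hmabs : Multipliable (fun m : ℕ => ‖1 - w * (t : ℂ) ^ m‖) := by
    have := hm.norm
    simpa using this
  rw [habs]
  refine rtprod_le_rtprod (fun m => ?_) (fun m => ?_) (rmult ht0 ht1 (le_of_eq (abs_of_pos ht0))) hmabs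
  · have := rpos_fac ht0 ht1 (le_of_eq (abs_of_pos ht0)) m
    linarith
  have h1 : 1 - ‖w * (t : ℂ) ^ m‖ ≤ ‖1 - w * (t : ℂ) ^ m‖ := by
    have := norm_sub_norm_le (1 : ℂ) (w * (t : ℂ) ^ m)
    simpa using this
  have h2 := cabs_fac ht0 hw m
  linarith

end Aux

theorem stmt15 (M n : ℕ) (hM : 0 < M) (hn : 0 < n) (N : ℕ) (t : ℝ) (ht : t ∈ Set.Ioo (0:ℝ) 1)
    (R : ℝ) (hR : 0 < R) (a z : ℂ) (ha : 0 < ‖a‖)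
    (haz : ‖a‖ = ‖z‖) (hz1 : ‖z‖ ≤ 1)
    (zs ws : Fin N → ℂ) (xs : Fin n → ℂ) (ys : Fin M → ℂ)
    (hzs : ∀ i, ‖z‖ ≤ ‖zs i‖)
    (hws : ∀ i, ‖z‖ ≤ ‖ws i‖)
    (hxs : ∀ j, ‖xs j‖ ≤ R) (hys : ∀ k, ‖ys k‖ ≤ 1)
    (u : ℂ) (c : ℕ) (hc : 1 ≤ c) :
    ‖hTerm M n N t a z zs ws xs ys u c‖ ≤
      rPoch (-t) t ^ N * (1 + R / ‖a‖) ^ n * ‖u‖ ^ c *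
        t ^ (-((c * n : ℕ) : ℤ)) / (‖a‖ * (1 - t) ^ (M + 1) * rPoch t t ^ N) := by
  obtain ⟨ht0, ht1⟩ := ht
  set A := ‖a‖ with hA
  have hzA : ‖z‖ = A := haz.symm
  have htc : t ^ c ≤ t := by
    calc t ^ c ≤ t ^ 1 := pow_le_pow_of_le_one ht0.le ht1.le hc
      _ = t := pow_one t
  have htc0 : 0 < t ^ c := pow_pos ht0 c
  have htc1 : t ^ c ≤ 1 := htc.trans ht1.le
  have hτ : (t : ℝ) ^ (-(c : ℤ)) = (t ^ c)⁻¹ := by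
    rw [zpow_neg, zpow_natCast]
  have hτ1 : (1 : ℝ) ≤ (t ^ c)⁻¹ := (one_le_inv₀ htc0).mpr htc1
  have hP : 0 < rPoch t t := rtprod_pos ht0 ht1 (le_of_eq (abs_of_pos ht0))
  have hPn : 0 < rPoch (-t) t := rtprod_pos ht0 ht1 (by rw [abs_neg, abs_of_pos ht0])
  -- expansion
  have habs_zt : ‖z * (t : ℂ) ^ c‖ = A * t ^ c := by
    rw [norm_mul, norm_pow, Complex.norm_real, Real.norm_eq_abs, abs_of_pos ht0, hzA]
  have expand : ‖hTerm M n N t a z zs ws xs ys u c‖ =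
      (‖u‖ ^ c / ‖a - z * (t : ℂ) ^ c‖) *
      (∏ k : Fin M, (‖1 - z * ys k * (t : ℂ) ^ c‖)⁻¹) *
      (∏ j : Fin n, ‖1 - xs j * z⁻¹ * (t : ℂ) ^ (-(c : ℤ))‖) *
      (∏ i : Fin N, ‖cPoch (z * (ws i)⁻¹ * (t : ℂ) ^ c) t‖ /
        ‖cPoch (z * (zs i)⁻¹ * (t : ℂ) ^ c) t‖) := by
    unfold hTerm
    rw [norm_mul, norm_mul, norm_mul, norm_div, norm_pow, norm_prod, norm_prod, norm_prod]
    simp only [norm_inv, norm_div]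
  rw [expand]
  -- factor 1
  have h1 : ‖u‖ ^ c / ‖a - z * (t : ℂ) ^ c‖ ≤
      ‖u‖ ^ c / (A * (1 - t)) := by
    apply div_le_div_of_nonneg_left (by positivity) (mul_pos ha (by linarith))
    calc A * (1 - t) ≤ A * (1 - t ^ c) := by
          apply mul_le_mul_of_nonneg_left (by linarith) ha.le
      _ = A - A * t ^ c := by ring
      _ ≤ ‖a - z * (t : ℂ) ^ c‖ := by
          have := norm_sub_norm_le a (z * (t : ℂ) ^ c)
          rw [habs_zt] at this
          exact this
  -- factor 2
  have h2 : (∏ k : Fin M, (‖1 - z * ys k * (t : ℂ) ^ c‖)⁻¹) ≤ ((1 - t)⁻¹) ^ M := by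
    have hcard : ∀ b : ℝ, (∏ _x : Fin M, b) = b ^ M := by
      intro b; simp [Finset.prod_const]
    rw [← hcard]
    apply Finset.prod_le_prod (fun k _ => by positivity)
    intro k _
    apply inv_anti₀ (by linarith)
    have hyk : ‖z * ys k * (t : ℂ) ^ c‖ ≤ t := by
      rw [norm_mul, norm_mul, norm_pow, Complex.norm_real, Real.norm_eq_abs, abs_of_pos ht0]
      calc ‖z‖ * ‖ys k‖ * t ^ c ≤ 1 * 1 * t ^ c := by
            apply mul_le_mul (mul_le_mul hz1 (hys k) (by positivity) (by linarith))
              le_rfl htc0.le (by norm_num)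
        _ = t ^ c := by ring
        _ ≤ t := htc
    have := norm_sub_norm_le (1 : ℂ) (z * ys k * (t : ℂ) ^ c)
    simp only [norm_one] at this
    linarith
  -- factor 3
  have h3 : (∏ j : Fin n, ‖1 - xs j * z⁻¹ * (t : ℂ) ^ (-(c : ℤ))‖) ≤
      ((1 + R / A) * (t ^ c)⁻¹) ^ n := by
    have hcard : ∀ b : ℝ, (∏ _x : Fin n, b) = b ^ n := by
      intro b; simp [Finset.prod_const]
    rw [← hcard]
    apply Finset.prod_le_prod (fun j _ => by positivity)
    intro j _
    have hxj : ‖xs j * z⁻¹ * (t : ℂ) ^ (-(c : ℤ))‖ ≤ (R / A) * (t ^ c)⁻¹ := by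
      rw [norm_mul, norm_mul, norm_inv, norm_zpow, Complex.norm_real, Real.norm_eq_abs, abs_of_pos ht0, hzA, hτ]
      apply mul_le_mul_of_nonneg_right _ (by positivity)
      rw [div_eq_mul_inv]
      exact mul_le_mul_of_nonneg_right (hxs j) (by positivity)
    have htri : ‖1 - xs j * z⁻¹ * (t : ℂ) ^ (-(c : ℤ))‖ ≤
        1 + ‖xs j * z⁻¹ * (t : ℂ) ^ (-(c : ℤ))‖ := by
      have := norm_sub_le (1 : ℂ) (xs j * z⁻¹ * (t : ℂ) ^ (-(c : ℤ)))
      simpa using this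
    have hRA : 0 ≤ R / A := by positivity
    calc ‖1 - xs j * z⁻¹ * (t : ℂ) ^ (-(c : ℤ))‖
        ≤ 1 + (R / A) * (t ^ c)⁻¹ := by linarith
      _ ≤ (t ^ c)⁻¹ + (R / A) * (t ^ c)⁻¹ := by linarith
      _ = (1 + R / A) * (t ^ c)⁻¹ := by ring
  -- factor 4
  have h4 : (∏ i : Fin N, ‖cPoch (z * (ws i)⁻¹ * (t : ℂ) ^ c) t‖ /
      ‖cPoch (z * (zs i)⁻¹ * (t : ℂ) ^ c) t‖) ≤ (rPoch (-t) t / rPoch t t) ^ N := by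
    have hcard : ∀ b : ℝ, (∏ _x : Fin N, b) = b ^ N := by
      intro b; simp [Finset.prod_const]
    rw [← hcard]
    apply Finset.prod_le_prod (fun i _ => by positivity)
    intro i _
    have hw_abs : ∀ (v : ℂ), A ≤ ‖v‖ → ‖z * v⁻¹ * (t : ℂ) ^ c‖ ≤ t := by
      intro v hv
      rw [norm_mul, norm_mul, norm_inv, norm_pow, Complex.norm_real, Real.norm_eq_abs, abs_of_pos ht0, hzA]
      have hv0 : 0 < ‖v‖ := lt_of_lt_of_le ha hv
      have h1' : A * (‖v‖)⁻¹ ≤ 1 := by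
        rw [mul_inv_le_iff₀ hv0, one_mul]; exact hv
      calc A * (‖v‖)⁻¹ * t ^ c ≤ 1 * t ^ c :=
            mul_le_mul_of_nonneg_right h1' htc0.le
        _ = t ^ c := one_mul _
        _ ≤ t := htc
    exact div_le_div₀ hPn.le (cpoch_le ht0 ht1 (hw_abs _ (hzA ▸ hws i)))
      hP (cpoch_ge ht0 ht1 (hw_abs _ (hzA ▸ hzs i)))
  -- combine
  have hcomb : (‖u‖ ^ c / ‖a - z * (t : ℂ) ^ c‖) *
      (∏ k : Fin M, (‖1 - z * ys k * (t : ℂ) ^ c‖)⁻¹) *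
      (∏ j : Fin n, ‖1 - xs j * z⁻¹ * (t : ℂ) ^ (-(c : ℤ))‖) *
      (∏ i : Fin N, ‖cPoch (z * (ws i)⁻¹ * (t : ℂ) ^ c) t‖ /
        ‖cPoch (z * (zs i)⁻¹ * (t : ℂ) ^ c) t‖) ≤
      (‖u‖ ^ c / (A * (1 - t))) * ((1 - t)⁻¹) ^ M *
      ((1 + R / A) * (t ^ c)⁻¹) ^ n * (rPoch (-t) t / rPoch t t) ^ N := by
    have n1 : (0:ℝ) ≤ ∏ k : Fin M, (‖1 - z * ys k * (t : ℂ) ^ c‖)⁻¹ :=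
      Finset.prod_nonneg (fun k _ => by positivity)
    have n2 : (0:ℝ) ≤ ∏ j : Fin n, ‖1 - xs j * z⁻¹ * (t : ℂ) ^ (-(c : ℤ))‖ :=
      Finset.prod_nonneg (fun j _ => by positivity)
    have n3 : (0:ℝ) ≤ ∏ i : Fin N, ‖cPoch (z * (ws i)⁻¹ * (t : ℂ) ^ c) t‖ /
        ‖cPoch (z * (zs i)⁻¹ * (t : ℂ) ^ c) t‖ :=
      Finset.prod_nonneg (fun i _ => by positivity)
    have hRA : (0:ℝ) ≤ R / A := div_nonneg hR.le ha.le
    have hb1 : (0:ℝ) ≤ ‖u‖ ^ c / (A * (1 - t)) :=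
      div_nonneg (by positivity) (mul_nonneg ha.le (by linarith))
    have hb2 : (0:ℝ) ≤ ((1 - t)⁻¹) ^ M := pow_nonneg (inv_nonneg.mpr (by linarith)) M
    have hb3 : (0:ℝ) ≤ ((1 + R / A) * (t ^ c)⁻¹) ^ n :=
      pow_nonneg (mul_nonneg (by linarith) (inv_nonneg.mpr htc0.le)) n
    apply mul_le_mul (mul_le_mul (mul_le_mul h1 h2 n1 hb1) h3 n2 (mul_nonneg hb1 hb2))
      h4 n3 (mul_nonneg (mul_nonneg hb1 hb2) hb3)
  refine hcomb.trans (le_of_eq ?_)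
  -- final algebra
  have hzp : (t:ℝ) ^ (-((c * n : ℕ) : ℤ)) = ((t ^ c)⁻¹) ^ n := by
    rw [zpow_neg, zpow_natCast, pow_mul, inv_pow]
  rw [hzp]
  have hAne : A ≠ 0 := ha.ne'
  have h1t : (1 : ℝ) - t ≠ 0 := by linarith
  have hPne : rPoch t t ≠ 0 := hP.ne'
  generalize (1:ℝ) - t = s
  generalize 1 + R / A = B
  ring
end

section
/- Let (Ω, F, ℙ) be a probability space and let (X_n, Y_n), n ∈ ℕ, be a sequence of pairs of real-valued random variables on Ω. Let f_n : ℝ → [0,1] be a sequence of functions such that for each δ > 0, f_n converges uniformly to the indicator function 1_{(−∞,0)} on ℝ ∖ [−δ, δ]. Let p : ℝ² → ℝ be continuous, and assume that for each x, y ∈ ℝ, E[f_n(X_n − x)·f_n(Y_n − y)] → p(x, y) as n → ∞. Then for each x, y ∈ ℝ, ℙ(X_n ≤ x and Y_n ≤ y) → p(x, y) as n → ∞. -/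
open MeasureTheory Filter Set

lemma aux_int {Ω : Type*} [MeasurableSpace Ω] (P : Measure Ω) [IsProbabilityMeasure P]
    (h : Ω → ℝ) (hm : Measurable h) (h01 : ∀ ω, h ω ∈ Set.Icc (0:ℝ) 1) :
    Integrable h P := by
  refine (integrable_const (1:ℝ)).mono' hm.aestronglyMeasurable (ae_of_all _ fun ω => ?_)
  rw [Real.norm_eq_abs, abs_of_nonneg (h01 ω).1]
  exact (h01 ω).2

lemma aux_upper {Ω : Type*} [MeasurableSpace Ω] (P : Measure Ω) [IsProbabilityMeasure P]
    (h : Ω → ℝ) (hm : Measurable h) (h01 : ∀ ω, h ω ∈ Set.Icc (0:ℝ) 1)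
    (s : Set Ω) (hs : MeasurableSet s) (ε : ℝ) (hε : 0 ≤ ε)
    (hb : ∀ ω, ω ∉ s → h ω ≤ ε) :
    ∫ ω, h ω ∂P ≤ (P s).toReal + ε := by
  have hint : Integrable h P := aux_int P h hm h01
  have hi2 : Integrable (fun ω => s.indicator (fun _ => (1:ℝ)) ω + ε) P :=
    ((integrable_const (1:ℝ)).indicator hs).add (integrable_const ε)
  have hle : ∀ ω, h ω ≤ s.indicator (fun _ => (1:ℝ)) ω + ε := by
    intro ω
    by_cases hω : ω ∈ s
    · simp only [Set.indicator_of_mem hω]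
      have := (h01 ω).2; linarith
    · simp only [Set.indicator_of_notMem hω]
      have := hb ω hω; linarith
  calc ∫ ω, h ω ∂P ≤ ∫ ω, (s.indicator (fun _ => (1:ℝ)) ω + ε) ∂P :=
        integral_mono hint hi2 hle
    _ = (P s).toReal + ε := by
        rw [integral_add ((integrable_const (1:ℝ)).indicator hs) (integrable_const ε),
          integral_indicator_const _ hs, integral_const]
        simp; rfl

lemma aux_lower {Ω : Type*} [MeasurableSpace Ω] (P : Measure Ω) [IsProbabilityMeasure P]
    (h : Ω → ℝ) (hm : Measurable h) (h01 : ∀ ω, h ω ∈ Set.Icc (0:ℝ) 1)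
    (s : Set Ω) (hs : MeasurableSet s) (c : ℝ) (hc : 0 ≤ c)
    (hb : ∀ ω ∈ s, c ≤ h ω) :
    c * (P s).toReal ≤ ∫ ω, h ω ∂P := by
  have hle : ∀ ω, s.indicator (fun _ => c) ω ≤ h ω := by
    intro ω
    by_cases hω : ω ∈ s
    · simpa [Set.indicator_of_mem hω] using hb ω hω
    · simpa [Set.indicator_of_notMem hω] using (h01 ω).1
  calc c * (P s).toReal = ∫ ω, s.indicator (fun _ => c) ω ∂P := by
        rw [integral_indicator_const _ hs, smul_eq_mul]; exact mul_comm _ _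
    _ ≤ ∫ ω, h ω ∂P := integral_mono ((integrable_const c).indicator hs) (aux_int P h hm h01) hle

theorem stmt17 {Ω : Type*} [MeasurableSpace Ω] (P : MeasureTheory.Measure Ω)
    [MeasureTheory.IsProbabilityMeasure P]
    (X Y : ℕ → Ω → ℝ) (hX : ∀ n, Measurable (X n)) (hY : ∀ n, Measurable (Y n))
    (f : ℕ → ℝ → ℝ) (hfm : ∀ n, Measurable (f n)) (hf01 : ∀ n x, f n x ∈ Set.Icc (0:ℝ) 1)
    (hunif : ∀ δ > 0, TendstoUniformlyOn f ((Set.Iio (0:ℝ)).indicator fun _ => (1:ℝ))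
      Filter.atTop {y : ℝ | δ < |y|})
    (p : ℝ × ℝ → ℝ) (hp : Continuous p)
    (hE : ∀ x y : ℝ, Filter.Tendsto
      (fun n => ∫ ω, f n (X n ω - x) * f n (Y n ω - y) ∂P) Filter.atTop (nhds (p (x, y)))) :
    ∀ x y : ℝ, Filter.Tendsto (fun n => (P {ω | X n ω ≤ x ∧ Y n ω ≤ y}).toReal)
      Filter.atTop (nhds (p (x, y))) := by
  intro x y
  rw [Metric.tendsto_atTop]
  intro ε hε
  set ε' : ℝ := min (ε/8) (1/4) with hε'def
  have hε'pos : 0 < ε' := lt_min (by linarith) (by norm_num)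
  have hε'le : ε' ≤ ε/8 := min_le_left _ _
  have hε'le4 : ε' ≤ 1/4 := min_le_right _ _
  -- continuity along the diagonal
  have hc : ContinuousAt (fun t : ℝ => p (x + t, y + t)) 0 := by
    apply hp.continuousAt.comp
    exact ((continuous_const.add continuous_id).prodMk
      (continuous_const.add continuous_id)).continuousAt
  obtain ⟨δ0, hδ0, hδ0p⟩ := Metric.continuousAt_iff.mp hc (ε/4) (by linarith)
  set δ : ℝ := δ0/3 with hδdef
  have hδ : 0 < δ := by positivity
  have hp1 : |p (x + 2*δ, y + 2*δ) - p (x, y)| < ε/4 := by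
    have hd : dist (2*δ) (0:ℝ) < δ0 := by
      rw [Real.dist_eq, sub_zero, abs_of_pos (by positivity : (0:ℝ) < 2*δ)]
      rw [hδdef]; linarith
    simpa [Real.dist_eq] using hδ0p hd
  have hp2 : |p (x + -(2*δ), y + -(2*δ)) - p (x, y)| < ε/4 := by
    have hd : dist (-(2*δ)) (0:ℝ) < δ0 := by
      rw [Real.dist_eq, sub_zero, abs_neg, abs_of_pos (by positivity : (0:ℝ) < 2*δ)]
      rw [hδdef]; linarith
    simpa [Real.dist_eq] using hδ0p hd
  obtain ⟨N1, hN1⟩ := Filter.eventually_atTop.mp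
    ((Metric.tendstoUniformlyOn_iff.mp (hunif δ hδ)) ε' hε'pos)
  obtain ⟨N2, hN2⟩ := Metric.tendsto_atTop.mp (hE (x + 2*δ) (y + 2*δ)) ε' hε'pos
  obtain ⟨N3, hN3⟩ := Metric.tendsto_atTop.mp (hE (x - 2*δ) (y - 2*δ)) ε' hε'pos
  refine ⟨max N1 (max N2 N3), fun n hn => ?_⟩
  have hn1 := hN1 n (le_trans (le_max_left _ _) hn)
  have hn2 := hN2 n (le_trans ((le_max_left _ _).trans (le_max_right _ _)) hn)
  have hn3 := hN3 n (le_trans ((le_max_right _ _).trans (le_max_right _ _)) hn)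
  have fsmall : ∀ t : ℝ, δ < t → f n t < ε' := by
    intro t ht
    have hmem : t ∈ {y : ℝ | δ < |y|} := by
      rw [Set.mem_setOf_eq, abs_of_pos (hδ.trans ht)]; exact ht
    have h1 := hn1 t hmem
    rw [Set.indicator_of_notMem (by simp only [Set.mem_Iio, not_lt]; linarith), Real.dist_eq] at h1
    have h2 := (hf01 n t).1
    rw [abs_of_nonpos (by linarith)] at h1
    linarith
  have fbig : ∀ t : ℝ, t < -δ → 1 - ε' < f n t := by
    intro t ht
    have hmem : t ∈ {y : ℝ | δ < |y|} := by
      rw [Set.mem_setOf_eq, abs_of_neg (by linarith)]; linarith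
    have h1 := hn1 t hmem
    rw [Set.indicator_of_mem (by simp only [Set.mem_Iio]; linarith), Real.dist_eq] at h1
    have h2 := abs_lt.mp h1
    linarith
  set s : Set Ω := {ω | X n ω ≤ x ∧ Y n ω ≤ y} with hsdef
  have hs : MeasurableSet s := by
    have : s = X n ⁻¹' Set.Iic x ∩ Y n ⁻¹' Set.Iic y := rfl
    rw [this]
    exact ((hX n) measurableSet_Iic).inter ((hY n) measurableSet_Iic)
  have hFle1 : (P s).toReal ≤ 1 := by
    have h1 : P s ≤ 1 := prob_le_one
    calc (P s).toReal ≤ (1 : ENNReal).toReal := ENNReal.toReal_mono ENNReal.one_ne_top h1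
      _ = 1 := by simp
  have hFnn : 0 ≤ (P s).toReal := ENNReal.toReal_nonneg
  -- measurability/bounds of the integrands
  have hmp : ∀ a b : ℝ, Measurable (fun ω => f n (X n ω - a) * f n (Y n ω - b)) := by
    intro a b
    exact ((hfm n).comp ((hX n).sub measurable_const)).mul
      ((hfm n).comp ((hY n).sub measurable_const))
  have h01p : ∀ a b : ℝ, ∀ ω, (fun ω => f n (X n ω - a) * f n (Y n ω - b)) ω ∈ Set.Icc (0:ℝ) 1 := by
    intro a b ω
    constructor
    · exact mul_nonneg (hf01 n _).1 (hf01 n _).1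
    · exact mul_le_one₀ (hf01 n _).2 (hf01 n _).1 (hf01 n _).2
  -- lower sandwich
  have hlow : (1 - 2*ε') * (P s).toReal ≤
      ∫ ω, f n (X n ω - (x + 2*δ)) * f n (Y n ω - (y + 2*δ)) ∂P := by
    apply aux_lower P _ (hmp _ _) (h01p _ _) s hs (1 - 2*ε') (by linarith)
    intro ω hω
    obtain ⟨hxω, hyω⟩ := hω
    have h1 : 1 - ε' < f n (X n ω - (x + 2*δ)) := fbig _ (by linarith)
    have h2 : 1 - ε' < f n (Y n ω - (y + 2*δ)) := fbig _ (by linarith)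
    have h3 : 0 ≤ f n (X n ω - (x + 2*δ)) := (hf01 n _).1
    have h4 : (1 - ε') * (1 - ε') ≤ f n (X n ω - (x + 2*δ)) * f n (Y n ω - (y + 2*δ)) :=
      mul_le_mul h1.le h2.le (by linarith) h3
    nlinarith [sq_nonneg ε']
  -- upper sandwich
  have hupp : (∫ ω, f n (X n ω - (x - 2*δ)) * f n (Y n ω - (y - 2*δ)) ∂P) ≤
      (P s).toReal + ε' := by
    apply aux_upper P _ (hmp _ _) (h01p _ _) s hs ε' hε'pos.le
    intro ω hω
    rw [hsdef, Set.mem_setOf_eq] at hω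
    rcases not_and_or.mp hω with hω | hω
    · have h1 : f n (X n ω - (x - 2*δ)) < ε' := fsmall _ (by push_neg at hω; linarith)
      calc f n (X n ω - (x - 2*δ)) * f n (Y n ω - (y - 2*δ))
          ≤ ε' * 1 := mul_le_mul h1.le (hf01 n _).2 (hf01 n _).1 hε'pos.le
        _ = ε' := mul_one _
    · have h1 : f n (Y n ω - (y - 2*δ)) < ε' := fsmall _ (by push_neg at hω; linarith)
      calc f n (X n ω - (x - 2*δ)) * f n (Y n ω - (y - 2*δ))
          ≤ 1 * ε' := mul_le_mul (hf01 n _).2 h1.le (hf01 n _).1 (by norm_num)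
        _ = ε' := one_mul _
  rw [Real.dist_eq] at hn2 hn3 ⊢
  have hn2' := abs_lt.mp hn2
  have hn3' := abs_lt.mp hn3
  have hp1' := abs_lt.mp hp1
  have hp2' := abs_lt.mp hp2
  have hx2 : x + -(2*δ) = x - 2*δ := by ring
  have hy2 : y + -(2*δ) = y - 2*δ := by ring
  rw [hx2, hy2] at hp2'
  have hmul : ε' * (P s).toReal ≤ ε' * 1 := mul_le_mul_of_nonneg_left hFle1 hε'pos.le
  rw [abs_lt]
  constructor <;> nlinarith
end
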